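/- arXiv:1401.0711 — 4 statements merged into one kernel-verified Lean document; each statement's English description precedes it below -/
import Mathlib

section
/- Let μ be a probability measure on (Σ^ω, B) with full support on cylinders, i.e. Pr(x) = μ(xΣ^ω) > 0 for every x ∈ Σ*. If the probabilistic Nerode relation ∼ has finitely many equivalence classes, then μ is generated by a PFSA: there exist a PFSA G = (Q, δ, π̃) over Σ whose state set Q is in bijection with the set of Nerode classes, and a state q_0 ∈ Q (the class of the empty word), such that μ(xΣ^ω) = π̃(q_0, x) for every x ∈ Σ*. -/
open MeasureTheory Filter

/-- Cylinder set `xΣ^ω` of a finite word `x`: infinite sequences beginning with `x`. -/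
def Cylinder {A : Type*} (x : List A) : Set (ℕ → A) :=
  {ω | ∀ i : Fin x.length, ω i = x.get i}

/-- The σ-algebra `B` on `Σ^ω` generated by the cylinder sets. -/
def CylSigma (A : Type*) : MeasurableSpace (ℕ → A) :=
  MeasurableSpace.generateFrom (Set.range (Cylinder (A := A)))

/-- A probabilistic finite-state automaton over a finite alphabet `S`. -/
structure PFSA (Q S : Type*) [Fintype S] where
  δ : Q → S → Q
  π : Q → S → ℝ
  π_nonneg : ∀ q σ, 0 ≤ π q σ
  π_sum : ∀ q, ∑ σ, π q σ = 1

namespace PFSA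

variable {Q S : Type*} [Fintype S]

/-- Extension of the transition map to finite words. -/
def δs (G : PFSA Q S) : Q → List S → Q
  | q, [] => q
  | q, σ :: x => G.δs (G.δ q σ) x

/-- Extension of the symbol-generation probabilities to finite words. -/
def πs (G : PFSA Q S) : Q → List S → ℝ
  | _, [] => 1
  | q, σ :: x => G.π q σ * G.πs (G.δ q σ) x

/-- `G` is strongly connected. -/
def StronglyConnected (G : PFSA Q S) : Prop :=
  ∀ q q' : Q, ∃ x : List S, G.δs q x = q' ∧ 0 < G.πs q x

/-- `G` has distinguishable states. -/
def Distinguishable (G : PFSA Q S) : Prop :=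
  ∀ q q' : Q, q ≠ q' → ∃ x : List S, G.πs q x ≠ G.πs q' x

variable [Fintype Q] [DecidableEq Q]

/-- The transition matrix `M` of the Markov chain induced by `G`. -/
def M (G : PFSA Q S) : Matrix Q Q ℝ :=
  fun q q' => ∑ σ, if G.δ q σ = q' then G.π q σ else 0

/-- `p` is a stationary distribution of `G`: a probability vector with `p M = p`. -/
def IsStationary (G : PFSA Q S) (p : Q → ℝ) : Prop :=
  (∀ q, 0 ≤ p q) ∧ (∑ q, p q = 1) ∧ ∀ q', ∑ q, p q * G.M q q' = p q'

/-- Symbol-specific transformation matrix `Γ_σ`. -/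
def Γ (G : PFSA Q S) (σ : S) : Matrix Q Q ℝ :=
  fun q q' => if G.δ q σ = q' then G.π q σ else 0

/-- Product of transformation matrices along a word: `Γ_{σ₁}⋯Γ_{σ_m}`. -/
def Γs (G : PFSA Q S) (x : List S) : Matrix Q Q ℝ := (x.map G.Γ).prod

/-- The (unnormalized) row vector `p Γ_{σ₁}⋯Γ_{σ_m}`. -/
def wvec (G : PFSA Q S) (p : Q → ℝ) (x : List S) : Q → ℝ :=
  Matrix.vecMul p (G.Γs x)

/-- `Pr(x) = ‖p Γ_{σ₁}⋯Γ_{σ_m}‖₁` (for a nonnegative vector `p`). -/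
def PrW (G : PFSA Q S) (p : Q → ℝ) (x : List S) : ℝ :=
  ∑ q, G.wvec p x q

/-- `℘_x`: the ℓ1-normalization of `p Γ_{σ₁}⋯Γ_{σ_m}`. -/
noncomputable def wdist (G : PFSA Q S) (p : Q → ℝ) (x : List S) : Q → ℝ :=
  fun q => G.wvec p x q / G.PrW p x

end PFSA

/-- The point-mass probability vector `e_q` at `q`. -/
def eVec {Q : Type*} [DecidableEq Q] (q : Q) : Q → ℝ := fun q' => if q' = q then 1 else 0

/-- The ℓ∞ norm of a finitely indexed vector. -/
noncomputable def linf {ι : Type*} [Fintype ι] (v : ι → ℝ) : ℝ := ⨆ i, |v i|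

/-- `x` is an `ε`-synchronizing word for `G` with stationary distribution `p`. -/
noncomputable def EpsSync {Q S : Type*} [Fintype S] [Fintype Q] [DecidableEq Q]
    (G : PFSA Q S) (p : Q → ℝ) (ε : ℝ) (x : List S) : Prop :=
  0 < G.PrW p x ∧ ∃ q : Q, linf (fun q' => G.wdist p x q' - eVec q q') ≤ ε

/-- `p` is a probability vector. -/
def IsProbVec {ι : Type*} [Fintype ι] (p : ι → ℝ) : Prop :=
  (∀ i, 0 ≤ p i) ∧ ∑ i, p i = 1

/-- Entropy (base 2) of a finitely supported vector (`0 log 0 = 0`). -/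
noncomputable def entropy2 {ι : Type*} [Fintype ι] (p : ι → ℝ) : ℝ :=
  -∑ i, p i * Real.logb 2 (p i)

/-- The generalized binary entropy function `B(ε,k)` (for `ε ∈ (0,1/2]`). -/
noncomputable def Bdev (ε : ℝ) (k : ℕ) : ℝ :=
  ε * Real.logb 2 (((k : ℝ) - 1) / ε) + (1 - ε) * Real.logb 2 (1 / (1 - ε))

/-- Number of (possibly overlapping) occurrences of `x` as a contiguous substring of `s`. -/
def countOcc {A : Type*} [DecidableEq A] (s x : List A) : ℕ :=
  ((List.range s.length).filter fun i => decide ((s.drop i).take x.length = x)).length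

/-- Total count `∑_{σ∈Σ} #^s(xσ)`. -/
def totCount {A : Type*} [Fintype A] [DecidableEq A] (s x : List A) : ℕ :=
  ∑ σ : A, countOcc s (x ++ [σ])

/-- The empirical symbolic derivative `φ^s(x)`. -/
noncomputable def phi {A : Type*} [Fintype A] [DecidableEq A] (s x : List A) : A → ℝ :=
  fun σ => (countOcc s (x ++ [σ]) : ℝ) / (totCount s x : ℝ)

/-- The length-`n` prefix `ω↾n` of an infinite sequence `ω`. -/
def pre {A : Type*} (ω : ℕ → A) (n : ℕ) : List A := (List.range n).map ω

/-- The probabilistic Nerode relation: `x ∼ y` iff `Pr(xz)·Pr(y) = Pr(yz)·Pr(x)`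
for every word `z`, where `Pr(x) = μ(xΣ^ω)`. -/
def Nerode {A : Type*} (μ : @Measure (ℕ → A) (CylSigma A)) (x y : List A) : Prop :=
  ∀ z : List A, μ (Cylinder (x ++ z)) * μ (Cylinder y) = μ (Cylinder (y ++ z)) * μ (Cylinder x)

section Stmt3Aux

variable {A : Type*}

lemma cyl_measurableSet (x : List A) :
    MeasurableSet[CylSigma A] (Cylinder x) :=
  MeasurableSpace.measurableSet_generateFrom ⟨x, rfl⟩

lemma cyl_nil : Cylinder ([] : List A) = Set.univ := by
  ext ω; simp only [Cylinder, Set.mem_setOf_eq, Set.mem_univ, iff_true]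
  intro i; exact absurd i.2 (by simp)

lemma cyl_append_single (x : List A) (σ : A) :
    Cylinder (x ++ [σ]) = Cylinder x ∩ {ω | ω x.length = σ} := by
  ext ω
  constructor
  · intro h
    refine ⟨fun i => ?_, ?_⟩
    · have := h ⟨i.1, by simp⟩
      simpa [List.getElem_append_left i.2] using this
    · have := h ⟨x.length, by simp⟩
      simpa [List.getElem_concat_length] using this
  · rintro ⟨h1, h2⟩ i
    rcases Nat.lt_or_ge i.1 x.length with hi | hi
    · have := h1 ⟨i.1, hi⟩
      simpa [List.getElem_append_left hi] using this
    · have hie : i.1 = x.length := by have := i.2; simp at this; omega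
      simp only [List.get_eq_getElem]
      rw [List.getElem_concat_length hie]
      rw [hie]; exact h2

lemma cyl_union (x : List A) [Fintype A] :
    Cylinder x = ⋃ σ : A, Cylinder (x ++ [σ]) := by
  simp only [cyl_append_single]
  ext ω
  simp only [Set.mem_iUnion, Set.mem_inter_iff, Set.mem_setOf_eq]
  constructor
  · intro h; exact ⟨ω x.length, h, rfl⟩
  · rintro ⟨σ, h, -⟩; exact h

lemma cyl_measure_sum [Fintype A] (μ : @Measure (ℕ → A) (CylSigma A)) (x : List A) :
    μ (Cylinder x) = ∑ σ : A, μ (Cylinder (x ++ [σ])) := by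
  letI : MeasurableSpace (ℕ → A) := CylSigma A
  rw [cyl_union x, measure_iUnion, tsum_fintype]
  · intro σ σ' hne
    simp only [Function.onFun, cyl_append_single]
    apply Set.disjoint_left.2
    rintro ω ⟨-, h1⟩ ⟨-, h2⟩
    exact hne (h1 ▸ h2 ▸ rfl)
  · intro σ; exact cyl_measurableSet _

end Stmt3Aux

/-- if the probabilistic Nerode relation of a fully supported
probability measure on `(Σ^ω, B)` has finite index, then the measure is generated
by a PFSA whose states are in bijection with the Nerode classes, with the class of
the empty word as initial state. -/
theorem stmt_3 {A : Type*} [Fintype A] (hA : 2 ≤ Fintype.card A)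
    (μ : @Measure (ℕ → A) (CylSigma A))
    (hμ : @IsProbabilityMeasure (ℕ → A) (CylSigma A) μ)
    (hpos : ∀ x : List A, 0 < μ (Cylinder x))
    (hfin : Finite (Quot (Nerode μ))) :
    ∃ (Q : Type) (_ : Finite Q) (e : Q ≃ Quot (Nerode μ)) (G : PFSA Q A) (q0 : Q),
      e q0 = Quot.mk (Nerode μ) ([] : List A) ∧
      ∀ x : List A, μ (Cylinder x) = ENNReal.ofReal (G.πs q0 x) := by
  classical
  letI : MeasurableSpace (ℕ → A) := CylSigma A
  haveI := hμ
  set pr : List A → ℝ := fun x => (μ (Cylinder x)).toReal with hpr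
  have hne : ∀ x : List A, μ (Cylinder x) ≠ ⊤ := fun x => measure_ne_top μ _
  have prpos : ∀ x : List A, 0 < pr x := fun x =>
    ENNReal.toReal_pos (hpos x).ne' (hne x)
  have prsum : ∀ x : List A, pr x = ∑ σ : A, pr (x ++ [σ]) := by
    intro x
    simp only [hpr]
    rw [← ENNReal.toReal_sum (fun σ _ => hne _), ← cyl_measure_sum]
  have prnil : pr [] = 1 := by
    simp [hpr, cyl_nil]
  have nreal : ∀ x y : List A, Nerode μ x y → ∀ z : List A,
      pr (x ++ z) * pr y = pr (y ++ z) * pr x := by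
    intro x y h z
    have := congrArg ENNReal.toReal (h z)
    simpa [ENNReal.toReal_mul] using this
  have ndiv : ∀ x y : List A, Nerode μ x y → ∀ z : List A,
      pr (x ++ z) / pr x = pr (y ++ z) / pr y := by
    intro x y h z
    rw [div_eq_div_iff (prpos x).ne' (prpos y).ne']
    exact nreal x y h z
  have hδwd : ∀ (σ : A) (x y : List A), Nerode μ x y →
      Nerode μ (x ++ [σ]) (y ++ [σ]) := by
    intro σ x y h z
    rw [← ENNReal.toReal_eq_toReal_iff' (by finiteness) (by finiteness)]
    simp only [ENNReal.toReal_mul]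
    change pr ((x ++ [σ]) ++ z) * pr (y ++ [σ]) =
      pr ((y ++ [σ]) ++ z) * pr (x ++ [σ])
    have h1 : pr (x ++ (σ :: z)) * pr y = pr (y ++ (σ :: z)) * pr x :=
      nreal x y h (σ :: z)
    have h2 : pr (x ++ [σ]) * pr y = pr (y ++ [σ]) * pr x :=
      nreal x y h [σ]
    have hxz : (x ++ [σ]) ++ z = x ++ (σ :: z) := by simp
    have hyz : (y ++ [σ]) ++ z = y ++ (σ :: z) := by simp
    rw [hxz, hyz]
    have key : pr (x ++ (σ :: z)) * pr (y ++ [σ]) * (pr x * pr y) =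
        pr (y ++ (σ :: z)) * pr (x ++ [σ]) * (pr x * pr y) := by
      calc pr (x ++ (σ :: z)) * pr (y ++ [σ]) * (pr x * pr y)
          = (pr (x ++ (σ :: z)) * pr y) * (pr (y ++ [σ]) * pr x) := by ring
        _ = (pr (y ++ (σ :: z)) * pr x) * (pr (x ++ [σ]) * pr y) := by rw [h1, ← h2]
        _ = pr (y ++ (σ :: z)) * pr (x ++ [σ]) * (pr x * pr y) := by ring
    exact mul_right_cancel₀ (mul_pos (prpos x) (prpos y)).ne' key
  let deltaQ : Quot (Nerode μ) → A → Quot (Nerode μ) := fun t σ =>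
    Quot.lift (fun x => Quot.mk (Nerode μ) (x ++ [σ]))
      (fun x y h => Quot.sound (hδwd σ x y h)) t
  let piQ : Quot (Nerode μ) → A → ℝ :=
    Quot.lift (fun x σ => pr (x ++ [σ]) / pr x)
      (fun x y h => funext fun σ => ndiv x y h [σ])
  obtain ⟨n, ⟨f⟩⟩ := Finite.exists_equiv_fin (Quot (Nerode μ))
  let e : Fin n ≃ Quot (Nerode μ) := f.symm
  have hπ_nonneg : ∀ (t : Quot (Nerode μ)) (σ : A), 0 ≤ piQ t σ := by
    intro t σ
    induction t using Quot.ind with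
    | _ w => exact div_nonneg (prpos _).le (prpos _).le
  have hπ_sum : ∀ t : Quot (Nerode μ), ∑ σ, piQ t σ = 1 := by
    intro t
    induction t using Quot.ind with
    | _ w =>
      show ∑ σ : A, pr (w ++ [σ]) / pr w = 1
      rw [← Finset.sum_div, ← prsum w, div_self (prpos w).ne']
  let G : PFSA (Fin n) A :=
    { δ := fun q σ => e.symm (deltaQ (e q) σ)
      π := fun q σ => piQ (e q) σ
      π_nonneg := fun q σ => hπ_nonneg _ _
      π_sum := fun q => hπ_sum _ }
  have keyπs : ∀ (x w : List A),
      G.πs (e.symm (Quot.mk (Nerode μ) w)) x = pr (w ++ x) / pr w := by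
    intro x
    induction x with
    | nil =>
      intro w
      simp [PFSA.πs, div_self (prpos w).ne']
    | cons σ x ih =>
      intro w
      show G.π _ σ * G.πs (G.δ _ σ) x = _
      have hπval : G.π (e.symm (Quot.mk (Nerode μ) w)) σ = pr (w ++ [σ]) / pr w := by
        show piQ (e (e.symm (Quot.mk (Nerode μ) w))) σ = _
        rw [Equiv.apply_symm_apply]
      have hδval : G.δ (e.symm (Quot.mk (Nerode μ) w)) σ =
          e.symm (Quot.mk (Nerode μ) (w ++ [σ])) := by
        show e.symm (deltaQ (e (e.symm (Quot.mk (Nerode μ) w))) σ) = _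
        rw [Equiv.apply_symm_apply]
      rw [hπval, hδval, ih (w ++ [σ])]
      have : (w ++ [σ]) ++ x = w ++ (σ :: x) := by simp
      rw [this]
      have ha : pr (w ++ [σ]) ≠ 0 := (prpos _).ne'
      have hb : pr w ≠ 0 := (prpos _).ne'
      field_simp
  refine ⟨Fin n, inferInstance, e, G, e.symm (Quot.mk (Nerode μ) []), by simp [e], ?_⟩
  intro x
  rw [keyπs x [], prnil, div_one]
  show μ (Cylinder x) = ENNReal.ofReal (pr ([] ++ x))
  rw [List.nil_append, hpr, ENNReal.ofReal_toReal (hne x)]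
end

section
/- (ε-Synchronization of Probabilistic Automata) Let G = (Q, δ, π̃) be a strongly connected PFSA over Σ with distinguishable states, and let ℘_λ be a stationary distribution of G. Then for every ε > 0 there exist a word x ∈ Σ* with Pr(x) > 0 and a state q ∈ Q such that ‖℘_x − e_q‖∞ ≤ ε. -/
open MeasureTheory Filter

namespace Stmt5
set_option linter.unusedSectionVars false

open Finset

variable {Q S : Type*} [Fintype S] [Fintype Q] [DecidableEq Q]

lemma pis_nil (G : PFSA Q S) (q : Q) : G.πs q [] = 1 := rfl

lemma pis_cons (G : PFSA Q S) (q : Q) (σ : S) (x : List S) :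
    G.πs q (σ :: x) = G.π q σ * G.πs (G.δ q σ) x := rfl

lemma ds_nil (G : PFSA Q S) (q : Q) : G.δs q [] = q := rfl

lemma ds_cons (G : PFSA Q S) (q : Q) (σ : S) (x : List S) :
    G.δs q (σ :: x) = G.δs (G.δ q σ) x := rfl

lemma pis_nonneg (G : PFSA Q S) : ∀ (x : List S) (q : Q), 0 ≤ G.πs q x
  | [], q => by rw [pis_nil]; norm_num
  | σ :: x, q => by
      rw [pis_cons]; exact mul_nonneg (G.π_nonneg q σ) (pis_nonneg G x _)

lemma ds_append (G : PFSA Q S) : ∀ (x z : List S) (q : Q),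
    G.δs q (x ++ z) = G.δs (G.δs q x) z
  | [], z, q => rfl
  | σ :: x, z, q => by rw [List.cons_append, ds_cons, ds_cons]; exact ds_append G x z _

lemma pis_append (G : PFSA Q S) : ∀ (x z : List S) (q : Q),
    G.πs q (x ++ z) = G.πs q x * G.πs (G.δs q x) z
  | [], z, q => by rw [List.nil_append, pis_nil, ds_nil, one_mul]
  | σ :: x, z, q => by
      rw [List.cons_append, pis_cons, pis_cons, ds_cons, pis_append G x z, mul_assoc]

lemma sum_pis_ofFn (G : PFSA Q S) : ∀ (n : ℕ) (q : Q),
    ∑ v : Fin n → S, G.πs q (List.ofFn v) = 1 := by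
  intro n
  induction n with
  | zero => intro q; simp [pis_nil]
  | succ n ih =>
      intro q
      rw [← Equiv.sum_comp (Fin.consEquiv fun _ : Fin (n + 1) => S)
        (fun v => G.πs q (List.ofFn v))]
      rw [Fintype.sum_prod_type]
      have h2 : ∀ σ : S, ∑ w : Fin n → S,
          G.πs q (List.ofFn ((Fin.consEquiv fun _ => S) (σ, w))) = G.π q σ := by
        intro σ
        have h3 : ∀ w : Fin n → S,
            G.πs q (List.ofFn ((Fin.consEquiv fun _ => S) (σ, w)))
              = G.π q σ * G.πs (G.δ q σ) (List.ofFn w) := by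
          intro w
          rw [List.ofFn_succ]
          simp only [Fin.consEquiv_apply, Fin.cons_zero, Fin.cons_succ]
          rw [pis_cons]
        rw [Finset.sum_congr rfl fun w _ => h3 w, ← Finset.mul_sum, ih, mul_one]
      rw [Finset.sum_congr rfl fun σ _ => h2 σ]
      exact G.π_sum q

/-- pushforward of a weight vector along a word -/
noncomputable def PUSH (G : PFSA Q S) (p : Q → ℝ) (x : List S) (q' : Q) : ℝ :=
  ∑ r, p r * (if G.δs r x = q' then G.πs r x else 0)

/-- total probability of a word from a weight vector -/
noncomputable def PR (G : PFSA Q S) (p : Q → ℝ) (x : List S) : ℝ :=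
  ∑ r, p r * G.πs r x

lemma collapse {D1 : Q → Q} (P1 : Q → ℝ) (p F : Q → ℝ) :
    ∑ r' : Q, (∑ r : Q, p r * (if D1 r = r' then P1 r else 0)) * F r'
      = ∑ r : Q, p r * (P1 r * F (D1 r)) := by
  calc ∑ r' : Q, (∑ r : Q, p r * (if D1 r = r' then P1 r else 0)) * F r'
      = ∑ r : Q, ∑ r' : Q, if D1 r = r' then p r * (P1 r * F r') else 0 := by
        simp only [Finset.sum_mul]
        rw [Finset.sum_comm]
        exact Finset.sum_congr rfl fun r _ => Finset.sum_congr rfl fun r' _ => by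
          split <;> ring
    _ = ∑ r : Q, p r * (P1 r * F (D1 r)) :=
        Finset.sum_congr rfl fun r _ => by rw [Finset.sum_ite_eq]; simp

lemma PUSH_nil (G : PFSA Q S) (p : Q → ℝ) (q' : Q) : PUSH G p [] q' = p q' := by
  unfold PUSH
  simp only [ds_nil, pis_nil, mul_ite, mul_one, mul_zero]
  change (∑ r, p r * if r = q' then (1 : ℝ) else 0) = p q'
  simp

lemma PUSH_cons (G : PFSA Q S) (p : Q → ℝ) (σ : S) (x : List S) (q' : Q) :
    PUSH G p (σ :: x) q'
      = PUSH G (fun r' => ∑ r, p r * (if G.δ r σ = r' then G.π r σ else 0)) x q' := by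
  unfold PUSH
  rw [collapse (D1 := fun r => G.δ r σ) (fun r => G.π r σ) p
    (fun r' => if G.δs r' x = q' then G.πs r' x else 0)]
  refine Finset.sum_congr rfl fun r _ => ?_
  rw [ds_cons, pis_cons]
  split <;> ring

lemma PUSH_push (G : PFSA Q S) (p : Q → ℝ) (x z : List S) (q' : Q) :
    PUSH G (PUSH G p x) z q' = PUSH G p (x ++ z) q' := by
  unfold PUSH
  rw [collapse (D1 := fun r => G.δs r x) (fun r => G.πs r x) p
    (fun r' => if G.δs r' z = q' then G.πs r' z else 0)]
  refine Finset.sum_congr rfl fun r _ => ?_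
  rw [ds_append, pis_append]
  split <;> ring

lemma PR_push (G : PFSA Q S) (p : Q → ℝ) (x z : List S) :
    PR G (PUSH G p x) z = PR G p (x ++ z) := by
  unfold PR PUSH
  rw [collapse (D1 := fun r => G.δs r x) (fun r => G.πs r x) p (fun r' => G.πs r' z)]
  refine Finset.sum_congr rfl fun r _ => ?_
  rw [pis_append]

lemma wvec_eq (G : PFSA Q S) : ∀ (x : List S) (p : Q → ℝ) (q' : Q),
    G.wvec p x q' = PUSH G p x q'
  | [], p, q' => by
      rw [PUSH_nil]
      simp [PFSA.wvec, PFSA.Γs, Matrix.vecMul_one]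
  | σ :: x, p, q' => by
      have h : G.wvec p (σ :: x)
          = G.wvec (fun r' => ∑ r, p r * (if G.δ r σ = r' then G.π r σ else 0)) x := by
        have h1 : (fun r' => ∑ r, p r * (if G.δ r σ = r' then G.π r σ else 0))
            = Matrix.vecMul p (G.Γ σ) := by
          funext r'
          simp [Matrix.vecMul, dotProduct, PFSA.Γ]
        rw [h1]
        simp [PFSA.wvec, PFSA.Γs, Matrix.vecMul_vecMul]
      rw [h, wvec_eq G x, PUSH_cons]

lemma sum_PUSH (G : PFSA Q S) (p : Q → ℝ) (x : List S) :
    ∑ q', PUSH G p x q' = PR G p x := by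
  unfold PUSH PR
  rw [Finset.sum_comm]
  refine Finset.sum_congr rfl fun r _ => ?_
  rw [← Finset.mul_sum, Finset.sum_ite_eq]
  simp

lemma PrW_eq (G : PFSA Q S) (p : Q → ℝ) (x : List S) : G.PrW p x = PR G p x := by
  unfold PFSA.PrW
  rw [Finset.sum_congr rfl fun q' _ => wvec_eq G x p q', sum_PUSH]

lemma PUSH_nonneg (G : PFSA Q S) {p : Q → ℝ} (hp : ∀ q, 0 ≤ p q) (x : List S) (q' : Q) :
    0 ≤ PUSH G p x q' := by
  refine Finset.sum_nonneg fun r _ => mul_nonneg (hp r) ?_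
  split
  · exact pis_nonneg G x r
  · exact le_refl 0

lemma PR_nonneg (G : PFSA Q S) {p : Q → ℝ} (hp : ∀ q, 0 ≤ p q) (x : List S) :
    0 ≤ PR G p x :=
  Finset.sum_nonneg fun r _ => mul_nonneg (hp r) (pis_nonneg G x r)

lemma PUSH_single_le (G : PFSA Q S) {p : Q → ℝ} (hp : ∀ q, 0 ≤ p q) (x : List S) (q : Q) :
    p q * G.πs q x ≤ PUSH G p x (G.δs q x) := by
  unfold PUSH
  have := Finset.single_le_sum (f := fun r => p r * (if G.δs r x = G.δs q x then G.πs r x else 0))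
    (fun r _ => by
      refine mul_nonneg (hp r) ?_
      split
      · exact pis_nonneg G x r
      · exact le_refl 0) (Finset.mem_univ q)
  simpa using this

lemma PUSH_div (G : PFSA Q S) (p : Q → ℝ) (c : ℝ) (x : List S) (q' : Q) :
    PUSH G (fun q => p q / c) x q' = PUSH G p x q' / c := by
  unfold PUSH
  rw [Finset.sum_div]
  exact Finset.sum_congr rfl fun r _ => by ring

lemma PR_div (G : PFSA Q S) (p : Q → ℝ) (c : ℝ) (x : List S) :
    PR G (fun q => p q / c) x = PR G p x / c := by
  unfold PR
  rw [Finset.sum_div]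
  exact Finset.sum_congr rfl fun r _ => by ring

/-- the set of reachable (normalized) distributions -/
def Dset (G : PFSA Q S) (w : Q → ℝ) : Set (Q → ℝ) :=
  {p | ∃ x : List S, 0 < PR G w x ∧ p = fun q => PUSH G w x q / PR G w x}

lemma continuous_PR (G : PFSA Q S) (z : List S) : Continuous fun p : Q → ℝ => PR G p z :=
  continuous_finset_sum _ fun r _ => (continuous_apply r).mul continuous_const

lemma continuous_PUSH (G : PFSA Q S) (z : List S) (q' : Q) :
    Continuous fun p : Q → ℝ => PUSH G p z q' :=
  continuous_finset_sum _ fun r _ => (continuous_apply r).mul continuous_const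

/-- closure of the reachable set is invariant under normalized pushforward -/
lemma closure_inv (G : PFSA Q S) (w : Q → ℝ) (p : Q → ℝ)
    (hp : p ∈ closure (Dset G w)) (z : List S) (hz : 0 < PR G p z) :
    (fun q => PUSH G p z q / PR G p z) ∈ closure (Dset G w) := by
  classical
  set U : Set (Q → ℝ) := {r | 0 < PR G r z} with hU
  have hUopen : IsOpen U := isOpen_lt continuous_const (continuous_PR G z)
  have hpU : p ∈ U := hz
  have hpUD : p ∈ closure (U ∩ Dset G w) :=
    hUopen.inter_closure (Set.mem_inter hpU hp)
  set Φ : (Q → ℝ) → (Q → ℝ) := fun r q => PUSH G r z q / PR G r z with hΦ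
  have hΦcont : ContinuousOn Φ U := by
    rw [continuousOn_pi]
    intro q
    exact ContinuousOn.div (continuous_PUSH G z q).continuousOn
      (continuous_PR G z).continuousOn (fun r hr => ne_of_gt hr)
  have hmem : Φ p ∈ closure (Φ '' (U ∩ Dset G w)) := by
    refine ContinuousWithinAt.mem_closure_image ?_ hpUD
    exact (hΦcont p hpU).mono Set.inter_subset_left
  have himg : Φ '' (U ∩ Dset G w) ⊆ Dset G w := by
    rintro _ ⟨r, ⟨hrU, x, hcx, hr⟩, rfl⟩
    subst hr
    set c : ℝ := PR G w x with hcdef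
    have hc : c ≠ 0 := ne_of_gt hcx
    have hPUSHr : ∀ q, PUSH G (fun q => PUSH G w x q / c) z q = PUSH G w (x ++ z) q / c := by
      intro q
      rw [PUSH_div, PUSH_push]
    have hPRr : PR G (fun q => PUSH G w x q / c) z = PR G w (x ++ z) / c := by
      rw [PR_div, PR_push]
    have hrU' : (0 : ℝ) < PR G (fun q => PUSH G w x q / c) z := hrU
    have hPRxz : 0 < PR G w (x ++ z) := by
      rw [hPRr] at hrU'
      have := mul_pos hrU' hcx
      rwa [div_mul_cancel₀ _ hc] at this
    refine ⟨x ++ z, hPRxz, ?_⟩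
    funext q
    show PUSH G (fun q => PUSH G w x q / c) z q / PR G (fun q => PUSH G w x q / c) z
        = PUSH G w (x ++ z) q / PR G w (x ++ z)
    rw [hPUSHr, hPRr, div_div_div_cancel_right₀]
    exact hc
  exact closure_mono himg hmem

lemma continuous_sup' {X : Type*} [TopologicalSpace X] (s : Finset Q) (hs : s.Nonempty)
    (f : Q → X → ℝ) (hf : ∀ q, Continuous (f q)) :
    Continuous fun x => s.sup' hs fun q => f q x := by
  induction hs using Finset.Nonempty.cons_induction with
  | singleton a => simpa using hf a
  | cons a s ha hs ih =>
      have hrw : ∀ x, (Finset.cons a s ha).sup' (Finset.cons_nonempty ha) (fun q => f q x)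
          = f a x ⊔ s.sup' hs fun q => f q x := fun x => Finset.sup'_cons hs _
      simp only [hrw]
      exact (hf a).sup ih

lemma continuous_inf' {X : Type*} [TopologicalSpace X] (s : Finset Q) (hs : s.Nonempty)
    (f : Q → X → ℝ) (hf : ∀ q, Continuous (f q)) :
    Continuous fun x => s.inf' hs fun q => f q x := by
  induction hs using Finset.Nonempty.cons_induction with
  | singleton a => simpa using hf a
  | cons a s ha hs ih =>
      have hrw : ∀ x, (Finset.cons a s ha).inf' (Finset.cons_nonempty ha) (fun q => f q x)
          = f a x ⊓ s.inf' hs fun q => f q x := fun x => Finset.inf'_cons hs _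
      simp only [hrw]
      exact (hf a).inf ih

lemma inf'_sup'_eq (p : Q → ℝ) (qs : Q) (hne : ∀ q : Q, (Finset.univ.erase q).Nonempty)
    (hQ : (Finset.univ : Finset Q).Nonempty)
    (hmax : ∀ q, p q ≤ p qs) :
    (Finset.univ.inf' hQ fun q => (Finset.univ.erase q).sup' (hne q) p)
      = (Finset.univ.erase qs).sup' (hne qs) p := by
  apply le_antisymm
  · exact Finset.inf'_le _ (Finset.mem_univ qs)
  · apply Finset.le_inf'
    intro q _
    rcases eq_or_ne q qs with rfl | h
    · exact le_refl _
    · refine Finset.sup'_le _ _ fun r _ => ?_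
      exact le_trans (hmax r)
        (Finset.le_sup' p (Finset.mem_erase.mpr ⟨Ne.symm h, Finset.mem_univ _⟩))

end Stmt5

/-- ε-Synchronization of Probabilistic Automata: for a strongly
connected PFSA with distinguishable states and stationary distribution `℘_λ`, every
`ε > 0` admits a word `x` with `Pr(x) > 0` and a state `q` with `‖℘_x − e_q‖∞ ≤ ε`. -/
theorem stmt_5 {Q S : Type*} [Fintype S] [Fintype Q] [DecidableEq Q]
    (hS : 2 ≤ Fintype.card S) (G : PFSA Q S)
    (hSC : G.StronglyConnected) (hDist : G.Distinguishable)
    (℘ : Q → ℝ) (h℘ : G.IsStationary ℘) :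
    ∀ ε > (0 : ℝ), ∃ (x : List S) (q : Q),
      0 < G.PrW ℘ x ∧ linf (fun q' => G.wdist ℘ x q' - eVec q q') ≤ ε := by
  classical
  intro ε hε
  obtain ⟨h℘0, h℘1, -⟩ := h℘
  have hQne : Nonempty Q := by
    by_contra h
    rw [not_nonempty_iff] at h
    rw [Finset.univ_eq_empty, Finset.sum_empty] at h℘1
    exact absurd h℘1 (by norm_num)
  have hQfne : (Finset.univ : Finset Q).Nonempty := Finset.univ_nonempty
  set D : Set (Q → ℝ) := Stmt5.Dset G ℘ with hDdef
  have hPRnil : Stmt5.PR G ℘ [] = 1 := by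
    unfold Stmt5.PR
    simp only [Stmt5.pis_nil, mul_one]
    exact h℘1
  have h℘D : ℘ ∈ D := by
    refine ⟨[], by rw [hPRnil]; norm_num, ?_⟩
    funext q
    rw [Stmt5.PUSH_nil, hPRnil, div_one]
  have hDsub : D ⊆ stdSimplex ℝ Q := by
    rintro _ ⟨x, hx, rfl⟩
    constructor
    · intro q
      exact div_nonneg (Stmt5.PUSH_nonneg G h℘0 x q) (le_of_lt hx)
    · rw [← Finset.sum_div, Stmt5.sum_PUSH, div_self (ne_of_gt hx)]
  have hKsub : closure D ⊆ stdSimplex ℝ Q :=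
    closure_minimal hDsub (isClosed_stdSimplex ℝ Q)
  have hKcpt : IsCompact (closure D) :=
    IsCompact.of_isClosed_subset (isCompact_stdSimplex ℝ Q) isClosed_closure hKsub
  have hKne : (closure D).Nonempty := ⟨℘, subset_closure h℘D⟩
  set f : (Q → ℝ) → ℝ := fun p => Finset.univ.sup' hQfne p with hfdef
  have hfc : Continuous f :=
    Stmt5.continuous_sup' _ hQfne (fun q (p : Q → ℝ) => p q) (fun q => continuous_apply q)
  have hfge : ∀ (p : Q → ℝ) (q : Q), p q ≤ f p := by
    intro p q
    rw [hfdef]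
    exact Finset.le_sup' p (Finset.mem_univ q)
  have hfex : ∀ p : Q → ℝ, ∃ q : Q, f p = p q := by
    intro p
    obtain ⟨q, -, h⟩ := Finset.exists_mem_eq_sup' hQfne p
    exact ⟨q, by rw [hfdef]; exact h⟩
  obtain ⟨p₀, hp₀K, hp₀max⟩ := hKcpt.exists_isMaxOn hKne hfc.continuousOn
  set β : ℝ := f p₀ with hβdef
  have hβle : ∀ p ∈ closure D, f p ≤ β := fun p hp => hp₀max hp
  have hsimp₀ := hKsub hp₀K
  have hβ1 : β ≤ 1 := by
    obtain ⟨q, hq⟩ := hfex p₀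
    rw [hβdef, hq]
    calc p₀ q ≤ ∑ r, p₀ r :=
          Finset.single_le_sum (fun r _ => hsimp₀.1 r) (Finset.mem_univ q)
      _ = 1 := hsimp₀.2
  have hβpos : 0 < β := by
    by_contra hb
    push_neg at hb
    have hzero : ∀ q : Q, p₀ q = 0 := fun q =>
      le_antisymm (le_trans (hfge p₀ q) hb) (hsimp₀.1 q)
    have hsum0 : ∑ r, p₀ r = 0 := Finset.sum_eq_zero fun q _ => hzero q
    rw [hsimp₀.2] at hsum0
    norm_num at hsum0
  -- Key step 1: if p ∈ closure D has mass β at qs, then PR p y = πs qs y for all y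
  have key1 : ∀ p ∈ closure D, ∀ qs : Q, p qs = β →
      ∀ y : List S, Stmt5.PR G p y = G.πs qs y := by
    intro p hpK qs hqs
    have hpsimp := hKsub hpK
    have hle : ∀ y : List S, G.πs qs y ≤ Stmt5.PR G p y := by
      intro y
      rcases lt_or_ge 0 (Stmt5.PR G p y) with hPR | hPR
      · have hp' : (fun q => Stmt5.PUSH G p y q / Stmt5.PR G p y) ∈ closure D :=
          Stmt5.closure_inv G ℘ p hpK y hPR
        have h1 : β * G.πs qs y ≤ Stmt5.PUSH G p y (G.δs qs y) := by
          have h := Stmt5.PUSH_single_le G hpsimp.1 y qs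
          rwa [hqs] at h
        have h2 : Stmt5.PUSH G p y (G.δs qs y) / Stmt5.PR G p y ≤ β := by
          exact le_trans (hfge (fun q => Stmt5.PUSH G p y q / Stmt5.PR G p y) (G.δs qs y)) (hβle _ hp')
        have h3 : Stmt5.PUSH G p y (G.δs qs y) ≤ β * Stmt5.PR G p y := by
          rwa [div_le_iff₀ hPR] at h2
        have h4 : β * G.πs qs y ≤ β * Stmt5.PR G p y := le_trans h1 h3
        exact le_of_mul_le_mul_left h4 hβpos
      · have hPR0 : Stmt5.PR G p y = 0 := le_antisymm hPR (Stmt5.PR_nonneg G hpsimp.1 y)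
        have hterm : p qs * G.πs qs y = 0 :=
          (Finset.sum_eq_zero_iff_of_nonneg (fun r _ =>
            mul_nonneg (hpsimp.1 r) (Stmt5.pis_nonneg G y r))).mp hPR0 qs (Finset.mem_univ qs)
        rw [hqs] at hterm
        rcases mul_eq_zero.mp hterm with h | h
        · exact absurd h (ne_of_gt hβpos)
        · rw [h, hPR0]
    intro y
    have hsum1 : ∑ v : Fin y.length → S, G.πs qs (List.ofFn v) = 1 :=
      Stmt5.sum_pis_ofFn G _ qs
    have hsum2 : ∑ v : Fin y.length → S, Stmt5.PR G p (List.ofFn v) = 1 := by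
      unfold Stmt5.PR
      rw [Finset.sum_comm]
      calc ∑ r, ∑ v : Fin y.length → S, p r * G.πs r (List.ofFn v)
          = ∑ r, p r * 1 := Finset.sum_congr rfl fun r _ => by
            rw [← Finset.mul_sum, Stmt5.sum_pis_ofFn]
        _ = 1 := by simpa using hpsimp.2
    have heq := (Finset.sum_eq_sum_iff_of_le
      (fun v (_ : v ∈ Finset.univ) => hle (List.ofFn v))).mp (by rw [hsum1, hsum2])
    have h := heq y.get (Finset.mem_univ _)
    rw [List.ofFn_get] at h
    exact h.symm
  -- Main claim: β = 1
  have hβeq : β = 1 := by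
    by_contra hβne
    have hβlt : β < 1 := lt_of_le_of_ne hβ1 hβne
    have hcard : 2 ≤ Fintype.card Q := by
      by_contra hc
      push_neg at hc
      have hpos : 0 < Fintype.card Q := Fintype.card_pos
      have h1 : Fintype.card Q = 1 := by omega
      obtain ⟨a, ha⟩ := Fintype.card_eq_one_iff.mp h1
      have hfa : f p₀ = p₀ a := by
        rw [hfdef]
        exact le_antisymm (Finset.sup'_le _ _ fun q _ => by rw [ha q])
          (Finset.le_sup' _ (Finset.mem_univ a))
      have hsum : ∑ r, p₀ r = p₀ a :=
        Finset.sum_eq_single_of_mem a (Finset.mem_univ a)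
          (fun b _ hb => absurd (ha b) hb)
      rw [hsimp₀.2] at hsum
      rw [hβdef, hfa, ← hsum] at hβlt
      norm_num at hβlt
    have herase : ∀ q : Q, (Finset.univ.erase q).Nonempty := by
      intro q
      rw [← Finset.card_pos, Finset.card_erase_of_mem (Finset.mem_univ q), Finset.card_univ]
      omega
    set g : (Q → ℝ) → ℝ :=
      fun p => Finset.univ.inf' hQfne fun q => (Finset.univ.erase q).sup' (herase q) p
      with hgdef
    have hgc : Continuous g := by
      rw [hgdef]
      exact Stmt5.continuous_inf' _ hQfne _
        (fun q => Stmt5.continuous_sup' _ (herase q) (fun r (p : Q → ℝ) => p r)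
          (fun r => continuous_apply r))
    have hKbcpt : IsCompact (closure D ∩ f ⁻¹' {β}) :=
      hKcpt.inter_right ((isClosed_singleton).preimage hfc)
    have hKbne : (closure D ∩ f ⁻¹' {β}).Nonempty := ⟨p₀, hp₀K, rfl⟩
    obtain ⟨p₁, hp₁Kb, hp₁max⟩ := hKbcpt.exists_isMaxOn hKbne hgc.continuousOn
    obtain ⟨hp₁K, hp₁f'⟩ := hp₁Kb
    have hp₁f : f p₁ = β := hp₁f'
    have hp₁simp := hKsub hp₁K
    obtain ⟨q1, hq1⟩ := hfex p₁
    have hq1β : p₁ q1 = β := by rw [← hq1]; exact hp₁f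
    have hmax₁ : ∀ q, p₁ q ≤ p₁ q1 :=
      fun q => le_trans (hfge p₁ q) (le_of_eq (by rw [hq1]))
    set γ : ℝ := g p₁ with hγdef
    have hγeq : γ = (Finset.univ.erase q1).sup' (herase q1) p₁ := by
      rw [hγdef, hgdef]
      exact Stmt5.inf'_sup'_eq p₁ q1 herase hQfne hmax₁
    obtain ⟨q2, hq2mem, hq2⟩ := Finset.exists_mem_eq_sup' (herase q1) p₁
    have hq2ne : q2 ≠ q1 := (Finset.mem_erase.mp hq2mem).1
    have hq2γ : p₁ q2 = γ := by rw [hγeq]; exact hq2.symm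
    have hγpos : 0 < γ := by
      by_contra hg0
      push_neg at hg0
      have hz : ∀ q, q ≠ q1 → p₁ q = 0 := by
        intro q hq
        refine le_antisymm ?_ (hp₁simp.1 q)
        calc p₁ q ≤ (Finset.univ.erase q1).sup' (herase q1) p₁ :=
              Finset.le_sup' _ (Finset.mem_erase.mpr ⟨hq, Finset.mem_univ q⟩)
          _ = γ := hγeq.symm
          _ ≤ 0 := hg0
      have hsum : ∑ r, p₁ r = p₁ q1 :=
        Finset.sum_eq_single_of_mem q1 (Finset.mem_univ q1) (fun b _ hb => hz b hb)
      rw [hp₁simp.2, hq1β] at hsum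
      exact absurd hsum.symm (ne_of_lt hβlt)
    -- pointwise inequality π̃(q2, z) ≤ π̃(q1, z)
    have hkey : ∀ z : List S, G.πs q2 z ≤ G.πs q1 z := by
      intro z
      have hPRz : Stmt5.PR G p₁ z = G.πs q1 z := key1 p₁ hp₁K q1 hq1β z
      rcases le_or_gt (G.πs q1 z) 0 with hz0 | hzpos
      · have h10 : G.πs q1 z = 0 := le_antisymm hz0 (Stmt5.pis_nonneg G z q1)
        have hPR0 : Stmt5.PR G p₁ z = 0 := by rw [hPRz, h10]
        have hterm : p₁ q2 * G.πs q2 z = 0 :=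
          (Finset.sum_eq_zero_iff_of_nonneg (fun r _ =>
            mul_nonneg (hp₁simp.1 r) (Stmt5.pis_nonneg G z r))).mp hPR0 q2 (Finset.mem_univ q2)
        rw [hq2γ] at hterm
        rcases mul_eq_zero.mp hterm with h | h
        · exact absurd h (ne_of_gt hγpos)
        · rw [h, h10]
      · have hPRpos : 0 < Stmt5.PR G p₁ z := by rw [hPRz]; exact hzpos
        have hp'K : (fun q => Stmt5.PUSH G p₁ z q / Stmt5.PR G p₁ z) ∈ closure D :=
          Stmt5.closure_inv G ℘ p₁ hp₁K z hPRpos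
        set p' : Q → ℝ := fun q => Stmt5.PUSH G p₁ z q / Stmt5.PR G p₁ z with hp'def
        have hlow : β ≤ p' (G.δs q1 z) := by
          have h1 : p₁ q1 * G.πs q1 z ≤ Stmt5.PUSH G p₁ z (G.δs q1 z) :=
            Stmt5.PUSH_single_le G hp₁simp.1 z q1
          rw [hq1β] at h1
          have : β * Stmt5.PR G p₁ z ≤ Stmt5.PUSH G p₁ z (G.δs q1 z) := by
            rw [hPRz]; exact h1
          rw [hp'def]
          rw [le_div_iff₀ hPRpos]
          exact this
        have hfp' : f p' ≤ β := hβle _ hp'K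
        have hupp : p' (G.δs q1 z) ≤ β := le_trans (hfge p' _) hfp'
        have hβ' : p' (G.δs q1 z) = β := le_antisymm hupp hlow
        rcases eq_or_ne (G.δs q2 z) (G.δs q1 z) with hmerge | hsep
        · -- merge case: the q2 term must vanish
          have hA : Stmt5.PUSH G p₁ z (G.δs q1 z) = β * G.πs q1 z := by
            have h2 : Stmt5.PUSH G p₁ z (G.δs q1 z) / Stmt5.PR G p₁ z = β := hβ'
            rw [div_eq_iff (ne_of_gt hPRpos)] at h2
            rw [h2, hPRz]
          have hsplit : p₁ q1 * (if G.δs q1 z = G.δs q1 z then G.πs q1 z else 0)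
              + ∑ r ∈ Finset.univ.erase q1,
                  p₁ r * (if G.δs r z = G.δs q1 z then G.πs r z else 0)
              = Stmt5.PUSH G p₁ z (G.δs q1 z) := by
            have h := Finset.add_sum_erase Finset.univ
              (fun r => p₁ r * (if G.δs r z = G.δs q1 z then G.πs r z else 0))
              (Finset.mem_univ q1)
            exact h
          rw [if_pos rfl, hq1β, hA] at hsplit
          have hzero : ∑ r ∈ Finset.univ.erase q1,
              p₁ r * (if G.δs r z = G.δs q1 z then G.πs r z else 0) = 0 := by linarith
          have hterm0 : p₁ q2 * (if G.δs q2 z = G.δs q1 z then G.πs q2 z else 0) = 0 :=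
            (Finset.sum_eq_zero_iff_of_nonneg (fun r _ => by
              refine mul_nonneg (hp₁simp.1 r) ?_
              split
              · exact Stmt5.pis_nonneg G z r
              · exact le_refl 0)).mp hzero q2
              (Finset.mem_erase.mpr ⟨hq2ne, Finset.mem_univ q2⟩)
          rw [if_pos hmerge, hq2γ] at hterm0
          rcases mul_eq_zero.mp hterm0 with h | h
          · exact absurd h (ne_of_gt hγpos)
          · rw [h]
            exact Stmt5.pis_nonneg G z q1
        · -- separated case: use maximality of γ
          have hp'Kb : p' ∈ closure D ∩ f ⁻¹' {β} := by
            refine ⟨hp'K, ?_⟩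
            have : f p' = β := le_antisymm hfp'
              (by rw [← hβ']; exact hfge p' _)
            exact this
          have hgp' : g p' ≤ γ := by rw [hγdef]; exact hp₁max hp'Kb
          have hmax' : ∀ q, p' q ≤ p' (G.δs q1 z) := fun q => by
            rw [hβ']
            exact le_trans (hfge p' q) hfp'
          have hgp'eq : g p' = (Finset.univ.erase (G.δs q1 z)).sup' (herase _) p' := by
            rw [hgdef]
            exact Stmt5.inf'_sup'_eq p' _ herase hQfne hmax'
          have hval : p' (G.δs q2 z) ≤ γ := by
            refine le_trans ?_ hgp'
            rw [hgp'eq]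
            exact Finset.le_sup' _ (Finset.mem_erase.mpr ⟨hsep, Finset.mem_univ _⟩)
          have h1 : γ * G.πs q2 z ≤ Stmt5.PUSH G p₁ z (G.δs q2 z) := by
            have h := Stmt5.PUSH_single_le G hp₁simp.1 z q2
            rwa [hq2γ] at h
          have h2 : Stmt5.PUSH G p₁ z (G.δs q2 z) ≤ γ * Stmt5.PR G p₁ z := by
            have := hval
            rw [hp'def] at this
            rwa [div_le_iff₀ hPRpos] at this
          have h3 : γ * G.πs q2 z ≤ γ * G.πs q1 z := by
            rw [← hPRz]
            exact le_trans h1 h2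
          exact le_of_mul_le_mul_left h3 hγpos
    -- contradiction with distinguishability
    obtain ⟨y, hy⟩ := hDist q2 q1 hq2ne
    have hstrict : G.πs q2 y < G.πs q1 y := lt_of_le_of_ne (hkey y) hy
    have hsumlt : (∑ v : Fin y.length → S, G.πs q2 (List.ofFn v))
        < ∑ v : Fin y.length → S, G.πs q1 (List.ofFn v) := by
      refine Finset.sum_lt_sum (fun v _ => hkey (List.ofFn v))
        ⟨y.get, Finset.mem_univ _, ?_⟩
      rw [List.ofFn_get]
      exact hstrict
    rw [Stmt5.sum_pis_ofFn, Stmt5.sum_pis_ofFn] at hsumlt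
    exact absurd hsumlt (lt_irrefl 1)
  -- extract the synchronizing word
  obtain ⟨qm, hqm⟩ := hfex p₀
  have hqmone : p₀ qm = 1 := by
    rw [← hqm, ← hβdef]
    exact hβeq
  have hp₀e : p₀ = eVec qm := by
    funext q
    rcases eq_or_ne q qm with rfl | hq
    · rw [hqmone, eVec]
      simp
    · have hsplit : p₀ qm + ∑ r ∈ Finset.univ.erase qm, p₀ r = 1 := by
        rw [Finset.add_sum_erase _ _ (Finset.mem_univ qm)]
        exact hsimp₀.2
      rw [hqmone] at hsplit
      have hzero : ∑ r ∈ Finset.univ.erase qm, p₀ r = 0 := by linarith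
      have h0 : p₀ q = 0 :=
        (Finset.sum_eq_zero_iff_of_nonneg (fun r _ => hsimp₀.1 r)).mp hzero q
          (Finset.mem_erase.mpr ⟨hq, Finset.mem_univ q⟩)
      rw [h0, eVec]
      simp [hq]
  obtain ⟨d, hdD, hdist⟩ := Metric.mem_closure_iff.mp hp₀K ε hε
  obtain ⟨x, hx, hdx⟩ := hdD
  refine ⟨x, qm, ?_, ?_⟩
  · rw [Stmt5.PrW_eq]
    exact hx
  · refine ciSup_le fun q => ?_
    show |G.wdist ℘ x q - eVec qm q| ≤ ε
    have hwd : G.wdist ℘ x q = d q := by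
      rw [hdx]
      unfold PFSA.wdist
      rw [Stmt5.wvec_eq, Stmt5.PrW_eq]
    rw [hwd, ← hp₀e]
    have hle : |d q - p₀ q| ≤ dist p₀ d := by
      rw [abs_sub_comm, ← Real.dist_eq]
      exact dist_le_pi_dist p₀ d q
    exact le_trans hle (le_of_lt hdist)
end

section
/- Let G = (Q, δ, π̃) be a strongly connected PFSA over Σ with distinguishable states and stationary distribution ℘_λ. Then there exists a constant C > 0 (depending only on G) such that for every ε ∈ (0,1) there is an ε-synchronizing word x ∈ Σ* of length |x| ≤ C·(1 + log(1/ε)); equivalently, at most O(1/ε) words from the lexicographically ordered set of all words over Σ need to be examined to find an ε-synchronizing word. -/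
open MeasureTheory Filter

set_option linter.unusedSectionVars false

section Aux

namespace PFSA
variable {Q S : Type*} [Fintype S] [Fintype Q] [DecidableEq Q]

lemma πs_nonneg (G : PFSA Q S) (q : Q) (x : List S) : 0 ≤ G.πs q x := by
  induction x generalizing q with
  | nil => exact zero_le_one
  | cons σ t ih => exact mul_nonneg (G.π_nonneg q σ) (ih _)

lemma πs_cons (G : PFSA Q S) (q : Q) (σ : S) (x : List S) :
    G.πs q (σ :: x) = G.π q σ * G.πs (G.δ q σ) x := rfl

lemma δs_cons (G : PFSA Q S) (q : Q) (σ : S) (x : List S) :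
    G.δs q (σ :: x) = G.δs (G.δ q σ) x := rfl

end PFSA

lemma sum_fin_succ_fn {S : Type*} [Fintype S] {n : ℕ} (f : (Fin (n+1) → S) → ℝ) :
    ∑ w : Fin (n+1) → S, f w = ∑ σ : S, ∑ v : Fin n → S, f (Fin.cons σ v) := by
  calc ∑ w : Fin (n+1) → S, f w
      = ∑ p : S × (Fin n → S), f (Fin.cons p.1 p.2) :=
        (Fintype.sum_equiv (Fin.consEquiv (fun _ : Fin (n+1) => S)) _ _
          (fun p => by simp [Fin.consEquiv])).symm
    _ = ∑ σ : S, ∑ v : Fin n → S, f (Fin.cons σ v) := Fintype.sum_prod_type _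

lemma ofFn_cons {S : Type*} {n : ℕ} (σ : S) (v : Fin n → S) :
    List.ofFn (Fin.cons σ v : Fin (n+1) → S) = σ :: List.ofFn v := by
  rw [List.ofFn_succ]; simp

namespace PFSA
variable {Q S : Type*} [Fintype S] [Fintype Q] [DecidableEq Q]

lemma sum_πs (G : PFSA Q S) (n : ℕ) (q : Q) :
    ∑ w : Fin n → S, G.πs q (List.ofFn w) = 1 := by
  induction n generalizing q with
  | zero => simp [PFSA.πs]
  | succ m ih =>
    rw [sum_fin_succ_fn]
    have h : ∀ σ : S, ∑ v : Fin m → S, G.πs q (List.ofFn (Fin.cons σ v)) = G.π q σ := by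
    
      intro σ
      simp only [ofFn_cons, PFSA.πs_cons, ← Finset.mul_sum, ih, mul_one]
    simp only [h, G.π_sum]

/-- Bhattacharyya-type coefficient over non-merging words. -/
noncomputable def g (G : PFSA Q S) : ℕ → Q → Q → ℝ
  | 0, a, b => if a = b then 0 else 1
  | n+1, a, b => ∑ σ : S, Real.sqrt (G.π a σ * G.π b σ) * G.g n (G.δ a σ) (G.δ b σ)

lemma g_nonneg (G : PFSA Q S) (n : ℕ) (a b : Q) : 0 ≤ G.g n a b := by
  induction n generalizing a b with
  | zero => unfold g; split <;> norm_num
  | succ m ih =>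
    exact Finset.sum_nonneg fun σ _ => mul_nonneg (Real.sqrt_nonneg _) (ih _ _)

lemma g_diag (G : PFSA Q S) (n : ℕ) (a : Q) : G.g n a a = 0 := by
  induction n generalizing a with
  | zero => simp [g]
  | succ m ih => simp [g, ih]

/-- `∑ σ √(x σ * y σ) ≤ 1` for probability vectors. -/
lemma sum_sqrt_le {ι : Type*} [Fintype ι] {x y : ι → ℝ} (hx : ∀ i, 0 ≤ x i)
    (hy : ∀ i, 0 ≤ y i) (hx1 : ∑ i, x i = 1) (hy1 : ∑ i, y i = 1) :
    ∑ i, Real.sqrt (x i * y i) ≤ 1 := by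
  have h : ∀ i, Real.sqrt (x i * y i) ≤ (x i + y i) / 2 := by
    intro i
    rw [Real.sqrt_mul (hx i)]
    have := two_mul_le_add_sq (Real.sqrt (x i)) (Real.sqrt (y i))
    rw [Real.sq_sqrt (hx i), Real.sq_sqrt (hy i)] at this
    linarith
  calc ∑ i, Real.sqrt (x i * y i) ≤ ∑ i, (x i + y i) / 2 := Finset.sum_le_sum fun i _ => h i
    _ = 1 := by rw [← Finset.sum_div, Finset.sum_add_distrib, hx1, hy1]; norm_num

lemma eq_of_sum_sqrt_eq {ι : Type*} [Fintype ι] {x y : ι → ℝ} (hx : ∀ i, 0 ≤ x i)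
    (hy : ∀ i, 0 ≤ y i) (hx1 : ∑ i, x i = 1) (hy1 : ∑ i, y i = 1)
    (h : ∑ i, Real.sqrt (x i * y i) = 1) : ∀ i, x i = y i := by
  have key : ∑ i, (Real.sqrt (x i) - Real.sqrt (y i))^2 = 0 := by
    have expand : ∀ i, (Real.sqrt (x i) - Real.sqrt (y i))^2
        = x i + y i - 2 * Real.sqrt (x i * y i) := by
      intro i
      rw [sub_sq, Real.sq_sqrt (hx i), Real.sq_sqrt (hy i), Real.sqrt_mul (hx i)]
      ring
    simp only [expand]
    rw [Finset.sum_sub_distrib, Finset.sum_add_distrib, hx1, hy1, ← Finset.mul_sum, h]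
    norm_num
  intro i
  have h0 : (Real.sqrt (x i) - Real.sqrt (y i))^2 = 0 := by
    have := (Finset.sum_eq_zero_iff_of_nonneg (fun j _ => sq_nonneg _)).1 key i (Finset.mem_univ i)
    exact this
  have : Real.sqrt (x i) = Real.sqrt (y i) := by
    have := pow_eq_zero_iff (n := 2) (by norm_num) |>.1 h0
    linarith [this]
  calc x i = Real.sqrt (x i) ^ 2 := (Real.sq_sqrt (hx i)).symm
    _ = Real.sqrt (y i) ^ 2 := by rw [this]
    _ = y i := Real.sq_sqrt (hy i)

lemma g_le_one (G : PFSA Q S) (n : ℕ) (a b : Q) : G.g n a b ≤ 1 := by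
  induction n generalizing a b with
  | zero => unfold g; split <;> norm_num
  | succ m ih =>
    calc G.g (m+1) a b = ∑ σ : S, Real.sqrt (G.π a σ * G.π b σ) * G.g m (G.δ a σ) (G.δ b σ) := rfl
      _ ≤ ∑ σ : S, Real.sqrt (G.π a σ * G.π b σ) * 1 :=
          Finset.sum_le_sum fun σ _ => mul_le_mul_of_nonneg_left (ih _ _) (Real.sqrt_nonneg _)
      _ = ∑ σ : S, Real.sqrt (G.π a σ * G.π b σ) := by simp
      _ ≤ 1 := sum_sqrt_le (G.π_nonneg a) (G.π_nonneg b) (G.π_sum a) (G.π_sum b)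

lemma g_succ_le (G : PFSA Q S) (n : ℕ) (a b : Q) : G.g (n+1) a b ≤ G.g n a b := by
  induction n generalizing a b with
  | zero =>
    by_cases h : a = b
    · subst h; simp [g_diag]
    · calc G.g 1 a b ≤ 1 := G.g_le_one 1 a b
        _ = G.g 0 a b := by simp [g, h]
  | succ m ih =>
    calc G.g (m+2) a b = ∑ σ : S, Real.sqrt (G.π a σ * G.π b σ) * G.g (m+1) (G.δ a σ) (G.δ b σ) := rfl
      _ ≤ ∑ σ : S, Real.sqrt (G.π a σ * G.π b σ) * G.g m (G.δ a σ) (G.δ b σ) :=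
          Finset.sum_le_sum fun σ _ => mul_le_mul_of_nonneg_left (ih _ _) (Real.sqrt_nonneg _)
      _ = G.g (m+1) a b := rfl

lemma g_antitone (G : PFSA Q S) {m n : ℕ} (h : m ≤ n) (a b : Q) : G.g n a b ≤ G.g m a b := by
  induction n with
  | zero => simp_all
  | succ k ih =>
    rcases Nat.lt_or_ge m (k+1) with h' | h'
    · exact le_trans (G.g_succ_le k a b) (ih (Nat.lt_succ_iff.1 h'))
    · have : m = k+1 := le_antisymm h h'
      subst this; rfl

end PFSA
end Aux
namespace PFSA
variable {Q S : Type*} [Fintype S] [Fintype Q] [DecidableEq Q]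

lemma g_one_analysis (G : PFSA Q S) {n : ℕ} {a b : Q} (h1 : G.g (n+1) a b = 1) :
    (∀ σ, G.π a σ = G.π b σ) ∧
    (∀ σ, 0 < G.π a σ → G.g n (G.δ a σ) (G.δ b σ) = 1) := by
  set w : S → ℝ := fun σ => Real.sqrt (G.π a σ * G.π b σ) with hw
  set t : S → ℝ := fun σ => G.g n (G.δ a σ) (G.δ b σ) with ht
  have hwnn : ∀ σ, 0 ≤ w σ := fun σ => Real.sqrt_nonneg _
  have htle : ∀ σ, t σ ≤ 1 := fun σ => G.g_le_one n _ _
  have htnn : ∀ σ, 0 ≤ t σ := fun σ => G.g_nonneg n _ _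
  have hsum : ∑ σ, w σ * t σ = 1 := h1
  have hwle : ∑ σ, w σ ≤ 1 := sum_sqrt_le (G.π_nonneg a) (G.π_nonneg b) (G.π_sum a) (G.π_sum b)
  have hkey : ∑ σ, w σ * (1 - t σ) ≤ 0 := by
    have : ∑ σ, w σ * (1 - t σ) = (∑ σ, w σ) - 1 := by
      simp only [mul_sub, mul_one, Finset.sum_sub_distrib, hsum]
    linarith
  have hzero : ∀ σ ∈ Finset.univ, w σ * (1 - t σ) = 0 := by
    apply (Finset.sum_eq_zero_iff_of_nonneg
      (fun σ _ => mul_nonneg (hwnn σ) (by linarith [htle σ]))).1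
    have h0 : 0 ≤ ∑ σ, w σ * (1 - t σ) :=
      Finset.sum_nonneg fun σ _ => mul_nonneg (hwnn σ) (by linarith [htle σ])
    linarith
  have hweq : ∑ σ, w σ = 1 := by
    have : ∑ σ, w σ * (1 - t σ) = (∑ σ, w σ) - 1 := by
      simp only [mul_sub, mul_one, Finset.sum_sub_distrib, hsum]
    have hz : ∑ σ, w σ * (1 - t σ) = 0 := Finset.sum_eq_zero hzero
    linarith
  have hπ : ∀ σ, G.π a σ = G.π b σ :=
    eq_of_sum_sqrt_eq (G.π_nonneg a) (G.π_nonneg b) (G.π_sum a) (G.π_sum b) hweq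
  refine ⟨hπ, fun σ hσ => ?_⟩
  have hwσ : 0 < w σ := by
    rw [hw]; simp only
    rw [← hπ σ]
    exact Real.sqrt_pos.2 (mul_pos hσ hσ)
  have := hzero σ (Finset.mem_univ σ)
  rcases mul_eq_zero.1 this with h | h
  · exact absurd h (ne_of_gt hwσ)
  · linarith [sub_eq_zero.1 h]

lemma πs_eq_of_g_one (G : PFSA Q S) :
    ∀ (x : List S) (a b : Q), (∀ n, G.g n a b = 1) → G.πs a x = G.πs b x := by
  intro x
  induction x with
  | nil => intro a b _; rfl
  | cons σ t ih =>
    intro a b h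
    obtain ⟨hπ, hnext⟩ := G.g_one_analysis (h 1)
    rcases eq_or_lt_of_le (G.π_nonneg a σ) with hp | hp
    · rw [PFSA.πs_cons, PFSA.πs_cons, ← hp, ← hπ σ, ← hp]
      ring
    · have hg : ∀ n, G.g n (G.δ a σ) (G.δ b σ) = 1 := by
        intro n
        exact (G.g_one_analysis (h (n+1))).2 σ hp
      rw [PFSA.πs_cons, PFSA.πs_cons, hπ σ, ih _ _ hg]

lemma exists_g_lt_one (G : PFSA Q S) (hDist : G.Distinguishable) :
    ∀ a b : Q, a ≠ b → ∃ n, G.g n a b < 1 := by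
  intro a b hab
  by_contra h
  push_neg at h
  have hone : ∀ n, G.g n a b = 1 := fun n => le_antisymm (G.g_le_one n a b) (h n)
  obtain ⟨x, hx⟩ := hDist a b hab
  exact hx (G.πs_eq_of_g_one x a b hone)

lemma g_contract (G : PFSA Q S) {n₀ : ℕ} {κ : ℝ} (hκ0 : 0 ≤ κ)
    (hκ : ∀ a b : Q, a ≠ b → G.g n₀ a b ≤ κ) :
    ∀ (m : ℕ) (a b : Q), G.g (m + n₀) a b ≤ κ * G.g m a b := by
  intro m
  induction m with
  | zero =>
    intro a b
    by_cases h : a = b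
    · subst h; simp [g_diag]
    · calc G.g (0 + n₀) a b = G.g n₀ a b := by rw [Nat.zero_add]
        _ ≤ κ := hκ a b h
        _ = κ * G.g 0 a b := by simp [g, h]
  | succ m ih =>
    intro a b
    have : m + 1 + n₀ = (m + n₀) + 1 := by omega
    rw [this]
    calc G.g ((m+n₀)+1) a b
        = ∑ σ : S, Real.sqrt (G.π a σ * G.π b σ) * G.g (m+n₀) (G.δ a σ) (G.δ b σ) := rfl
      _ ≤ ∑ σ : S, Real.sqrt (G.π a σ * G.π b σ) * (κ * G.g m (G.δ a σ) (G.δ b σ)) :=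
          Finset.sum_le_sum fun σ _ => mul_le_mul_of_nonneg_left (ih _ _) (Real.sqrt_nonneg _)
      _ = κ * G.g (m+1) a b := by
          rw [show G.g (m+1) a b = ∑ σ : S, Real.sqrt (G.π a σ * G.π b σ) * G.g m (G.δ a σ) (G.δ b σ) from rfl,
            Finset.mul_sum]
          congr 1; funext σ; ring

lemma g_pow (G : PFSA Q S) {n₀ : ℕ} {κ : ℝ} (hκ0 : 0 ≤ κ)
    (hκ : ∀ a b : Q, a ≠ b → G.g n₀ a b ≤ κ) :
    ∀ (k : ℕ) (a b : Q), a ≠ b → G.g (k * n₀) a b ≤ κ ^ k := by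
  intro k
  induction k with
  | zero => intro a b h; simpa [g, h] using le_refl (1:ℝ)
  | succ k ih =>
    intro a b hab
    have : (k+1) * n₀ = k * n₀ + n₀ := by ring
    rw [this]
    calc G.g (k * n₀ + n₀) a b ≤ κ * G.g (k * n₀) a b := G.g_contract hκ0 hκ _ a b
      _ ≤ κ * κ ^ k := mul_le_mul_of_nonneg_left (ih a b hab) hκ0
      _ = κ ^ (k+1) := by ring

end PFSA
namespace PFSA
variable {Q S : Type*} [Fintype S] [Fintype Q] [DecidableEq Q]

lemma wvec_apply (G : PFSA Q S) :
    ∀ (x : List S) (p : Q → ℝ) (q' : Q),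
    G.wvec p x q' = ∑ q, p q * (if G.δs q x = q' then G.πs q x else 0) := by
  intro x
  induction x with
  | nil =>
    intro p q'
    simp only [wvec, Γs, List.map_nil, List.prod_nil, Matrix.vecMul_one]
    simp [PFSA.δs, PFSA.πs, eq_comm]
  | cons σ t ih =>
    intro p q'
    have h1 : G.wvec p (σ :: t) q' = G.wvec (Matrix.vecMul p (G.Γ σ)) t q' := by
      simp only [wvec, Γs, List.map_cons, List.prod_cons, ← Matrix.vecMul_vecMul]
    rw [h1, ih]
    have h2 : ∀ q, Matrix.vecMul p (G.Γ σ) q = ∑ r, p r * (if G.δ r σ = q then G.π r σ else 0) := by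
      intro q
      simp [Matrix.vecMul, dotProduct, PFSA.Γ]
    simp only [h2, Finset.sum_mul]
    rw [Finset.sum_comm]
    refine Finset.sum_congr rfl fun r _ => ?_
    have h3 : ∀ q, p r * (if G.δ r σ = q then G.π r σ else 0) *
        (if G.δs q t = q' then G.πs q t else 0)
        = if G.δ r σ = q then p r * G.π r σ * (if G.δs q t = q' then G.πs q t else 0) else 0 := by
      intro q
      by_cases h : G.δ r σ = q <;> simp [h]
    simp only [h3]
    rw [Finset.sum_ite_eq]
    simp only [Finset.mem_univ, if_true, PFSA.δs_cons, PFSA.πs_cons]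
    by_cases h : G.δs (G.δ r σ) t = q' <;> simp [h] <;> ring

lemma PrW_eq (G : PFSA Q S) (p : Q → ℝ) (x : List S) :
    G.PrW p x = ∑ q, p q * G.πs q x := by
  unfold PrW
  simp only [G.wvec_apply x p]
  rw [Finset.sum_comm]
  refine Finset.sum_congr rfl fun q _ => ?_
  rw [← Finset.mul_sum, Finset.sum_ite_eq, if_pos (Finset.mem_univ _)]

lemma g_eq_sum (G : PFSA Q S) :
    ∀ (n : ℕ) (a b : Q), G.g n a b =
      ∑ w : Fin n → S, (if G.δs a (List.ofFn w) = G.δs b (List.ofFn w) then 0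
        else Real.sqrt (G.πs a (List.ofFn w) * G.πs b (List.ofFn w))) := by
  intro n
  induction n with
  | zero =>
    intro a b
    have hl : ∀ w : Fin 0 → S, List.ofFn w = [] := fun w => by simp
    rw [Fintype.sum_unique]
    simp only [hl]
    show G.g 0 a b = if a = b then 0 else Real.sqrt (1 * 1)
    simp [g]
  | succ m ih =>
    intro a b
    rw [sum_fin_succ_fn, eq_comm]
    have hterm : ∀ (σ : S) (v : Fin m → S),
        (if G.δs a (List.ofFn (Fin.cons σ v)) = G.δs b (List.ofFn (Fin.cons σ v)) then 0
          else Real.sqrt (G.πs a (List.ofFn (Fin.cons σ v)) * G.πs b (List.ofFn (Fin.cons σ v))))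
        = Real.sqrt (G.π a σ * G.π b σ) *
          (if G.δs (G.δ a σ) (List.ofFn v) = G.δs (G.δ b σ) (List.ofFn v) then 0
            else Real.sqrt (G.πs (G.δ a σ) (List.ofFn v) * G.πs (G.δ b σ) (List.ofFn v))) := by
      intro σ v
      rw [ofFn_cons]
      simp only [PFSA.δs_cons, PFSA.πs_cons]
      by_cases h : G.δs (G.δ a σ) (List.ofFn v) = G.δs (G.δ b σ) (List.ofFn v)
      · simp [h]
      · simp only [h, ↓reduceIte]
        rw [show G.π a σ * G.πs (G.δ a σ) (List.ofFn v) * (G.π b σ * G.πs (G.δ b σ) (List.ofFn v))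
            = (G.π a σ * G.π b σ) * (G.πs (G.δ a σ) (List.ofFn v) * G.πs (G.δ b σ) (List.ofFn v)) by ring,
          Real.sqrt_mul (mul_nonneg (G.π_nonneg a σ) (G.π_nonneg b σ))]
    calc ∑ σ : S, ∑ v : Fin m → S,
          (if G.δs a (List.ofFn (Fin.cons σ v)) = G.δs b (List.ofFn (Fin.cons σ v)) then 0
            else Real.sqrt (G.πs a (List.ofFn (Fin.cons σ v)) * G.πs b (List.ofFn (Fin.cons σ v))))
        = ∑ σ : S, Real.sqrt (G.π a σ * G.π b σ) * G.g m (G.δ a σ) (G.δ b σ) := by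
          refine Finset.sum_congr rfl fun σ _ => ?_
          simp only [hterm]
          rw [← Finset.mul_sum, ← ih]
      _ = G.g (m+1) a b := rfl

end PFSA
namespace PFSA
variable {Q S : Type*} [Fintype S] [Fintype Q] [DecidableEq Q]

lemma wvec_nonneg (G : PFSA Q S) (℘ : Q → ℝ) (hnn : ∀ q, 0 ≤ ℘ q) (x : List S) (q' : Q) :
    0 ≤ G.wvec ℘ x q' := by
  rw [G.wvec_apply]
  refine Finset.sum_nonneg fun q _ => mul_nonneg (hnn q) ?_
  split
  · exact G.πs_nonneg q x
  · exact le_refl 0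

lemma key (G : PFSA Q S) (hDist : G.Distinguishable) (℘ : Q → ℝ)
    (hnn : ∀ q, 0 ≤ ℘ q) (hs1 : ∑ q, ℘ q = 1) :
    ∃ (n₀ : ℕ) (κ : ℝ), 1 ≤ n₀ ∧ 1/2 ≤ κ ∧ κ < 1 ∧
    ∀ k : ℕ, ∃ (x : List S) (t : Q), x.length = k * n₀ ∧ 0 < G.PrW ℘ x ∧
      G.PrW ℘ x - G.wvec ℘ x t ≤ ((Fintype.card Q : ℝ))^2 * κ^k * G.PrW ℘ x := by
  have hQ : Nonempty Q := by
    by_contra h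
    rw [not_nonempty_iff] at h
    rw [Finset.univ_eq_empty, Finset.sum_empty] at hs1
    exact one_ne_zero hs1.symm
  -- choose per-pair horizon
  have h1 : ∀ p : Q × Q, ∃ n, p.1 ≠ p.2 → G.g n p.1 p.2 < 1 := by
    intro p
    by_cases h : p.1 = p.2
    · exact ⟨0, fun h' => absurd h h'⟩
    · obtain ⟨n, hn⟩ := G.exists_g_lt_one hDist p.1 p.2 h
      exact ⟨n, fun _ => hn⟩
  choose f hf using h1
  set n₀ : ℕ := max 1 (Finset.univ.sup f) with hn₀
  have hn₀1 : 1 ≤ n₀ := le_max_left _ _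
  have hg : ∀ a b : Q, a ≠ b → G.g n₀ a b < 1 := by
    intro a b hab
    have hle : f (a, b) ≤ n₀ :=
      le_trans (Finset.le_sup (Finset.mem_univ (a, b))) (le_max_right _ _)
    exact lt_of_le_of_lt (G.g_antitone hle a b) (hf (a, b) hab)
  have hne : (Finset.univ : Finset (Q × Q)).Nonempty := Finset.univ_nonempty
  set κ₀ : ℝ := Finset.univ.sup' hne (fun p : Q × Q => if p.1 = p.2 then 0 else G.g n₀ p.1 p.2)
    with hκ₀
  set κ : ℝ := max (1/2) κ₀ with hκdef
  have hκhalf : 1/2 ≤ κ := le_max_left _ _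
  have hκ1 : κ < 1 := by
    apply max_lt (by norm_num)
    rw [hκ₀, Finset.sup'_lt_iff]
    intro p _
    by_cases h : p.1 = p.2
    · simp [h]
    · simpa [h] using hg p.1 p.2 h
  have hκ0 : (0:ℝ) ≤ κ := le_trans (by norm_num) hκhalf
  have hκb : ∀ a b : Q, a ≠ b → G.g n₀ a b ≤ κ := by
    intro a b hab
    refine le_trans ?_ (le_max_right _ _)
    have h0 := Finset.le_sup' (fun p : Q × Q => if p.1 = p.2 then 0 else G.g n₀ p.1 p.2)
      (Finset.mem_univ (a, b))
    simp only at h0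
    rwa [if_neg hab] at h0
  refine ⟨n₀, κ, hn₀1, hκhalf, hκ1, fun k => ?_⟩
  set n : ℕ := k * n₀ with hn
  set N : ℝ := (Fintype.card Q : ℝ) with hN
  set η : ℝ := N^2 * κ^k with hη
  -- probability of each word
  set F : (Fin n → S) → ℝ := fun w => G.PrW ℘ (List.ofFn w) with hF
  have hFnn : ∀ w, 0 ≤ F w := by
    intro w
    rw [hF]; simp only
    rw [G.PrW_eq]
    exact Finset.sum_nonneg fun q _ => mul_nonneg (hnn q) (G.πs_nonneg _ _)
  have hFsum : ∑ w, F w = 1 := by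
    simp only [hF, G.PrW_eq]
    rw [Finset.sum_comm]
    simp only [← Finset.mul_sum, G.sum_πs, mul_one]
    exact hs1
  -- argmax state for each word
  have hmax : ∀ w : Fin n → S, ∃ t : Q, ∀ q : Q,
      ℘ q * G.πs q (List.ofFn w) ≤ ℘ t * G.πs t (List.ofFn w) := by
    intro w
    obtain ⟨t, _, ht⟩ := Finset.exists_max_image Finset.univ
      (fun q => ℘ q * G.πs q (List.ofFn w)) Finset.univ_nonempty
    exact ⟨t, fun q => ht q (Finset.mem_univ q)⟩
  choose T hT using hmax
  set Err : (Fin n → S) → ℝ := fun w => ∑ b, (if G.δs b (List.ofFn w) = G.δs (T w) (List.ofFn w)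
    then 0 else ℘ b * G.πs b (List.ofFn w)) with hErr
  have hErrnn : ∀ w, 0 ≤ Err w := by
    intro w
    refine Finset.sum_nonneg fun b _ => ?_
    split
    · exact le_refl 0
    · exact mul_nonneg (hnn b) (G.πs_nonneg _ _)
  have hErreq : ∀ w, Err w = G.PrW ℘ (List.ofFn w)
      - G.wvec ℘ (List.ofFn w) (G.δs (T w) (List.ofFn w)) := by
    intro w
    rw [G.PrW_eq, G.wvec_apply, hErr, ← Finset.sum_sub_distrib]
    refine Finset.sum_congr rfl fun b _ => ?_
    by_cases h : G.δs b (List.ofFn w) = G.δs (T w) (List.ofFn w) <;> simp [h]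
  set D : (Fin n → S) → ℝ := fun w => ∑ a, ∑ b,
    (if G.δs a (List.ofFn w) = G.δs b (List.ofFn w) then 0
      else Real.sqrt (G.πs a (List.ofFn w) * G.πs b (List.ofFn w))) with hD
  have hErrD : ∀ w, Err w ≤ D w := by
    intro w
    have hslice : Err w ≤ ∑ b, (if G.δs (T w) (List.ofFn w) = G.δs b (List.ofFn w) then 0
        else Real.sqrt (G.πs (T w) (List.ofFn w) * G.πs b (List.ofFn w))) := by
      refine Finset.sum_le_sum fun b _ => ?_
      by_cases h : G.δs b (List.ofFn w) = G.δs (T w) (List.ofFn w)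
      · simp [h]
      · rw [if_neg h, if_neg (Ne.symm h)]
        have h1 : ℘ b * G.πs b (List.ofFn w) ≤ ℘ (T w) * G.πs (T w) (List.ofFn w) := hT w b
        have hb : 0 ≤ ℘ b * G.πs b (List.ofFn w) := mul_nonneg (hnn b) (G.πs_nonneg _ _)
        have h℘le : ∀ q, ℘ q ≤ 1 := by
          intro q
          rw [← hs1]
          exact Finset.single_le_sum (fun i _ => hnn i) (Finset.mem_univ q)
        have h2 : (℘ b * G.πs b (List.ofFn w))^2
            ≤ G.πs (T w) (List.ofFn w) * G.πs b (List.ofFn w) := by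
          have e1 : ℘ (T w) * G.πs (T w) (List.ofFn w) ≤ G.πs (T w) (List.ofFn w) := by
            nlinarith [G.πs_nonneg (T w) (List.ofFn w), h℘le (T w), hnn (T w)]
          have e2 : ℘ b * G.πs b (List.ofFn w) ≤ G.πs b (List.ofFn w) := by
            nlinarith [G.πs_nonneg b (List.ofFn w), h℘le b, hnn b]
          nlinarith [G.πs_nonneg b (List.ofFn w)]
        calc ℘ b * G.πs b (List.ofFn w)
            = Real.sqrt ((℘ b * G.πs b (List.ofFn w))^2) := (Real.sqrt_sq hb).symm
          _ ≤ Real.sqrt (G.πs (T w) (List.ofFn w) * G.πs b (List.ofFn w)) :=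
              Real.sqrt_le_sqrt h2
    refine le_trans hslice ?_
    refine Finset.single_le_sum (f := fun a => ∑ b, (if G.δs a (List.ofFn w) = G.δs b (List.ofFn w)
      then 0 else Real.sqrt (G.πs a (List.ofFn w) * G.πs b (List.ofFn w)))) ?_ (Finset.mem_univ (T w))
    intro a _
    refine Finset.sum_nonneg fun b _ => ?_
    split
    · exact le_refl 0
    · exact Real.sqrt_nonneg _
  have hDsum : ∑ w, D w ≤ η := by
    have h1 : ∑ w, D w = ∑ a, ∑ b, G.g n a b := by
      rw [hD]
      simp only
      rw [Finset.sum_comm]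
      refine Finset.sum_congr rfl fun a _ => ?_
      rw [Finset.sum_comm]
      refine Finset.sum_congr rfl fun b _ => ?_
      exact (G.g_eq_sum n a b).symm
    rw [h1, hη]
    have h2 : ∀ a b : Q, G.g n a b ≤ κ^k := by
      intro a b
      by_cases h : a = b
      · subst h; rw [g_diag]; positivity
      · exact G.g_pow hκ0 hκb k a b h
    calc ∑ a, ∑ b, G.g n a b ≤ ∑ _a : Q, ∑ _b : Q, κ^k :=
          Finset.sum_le_sum fun a _ => Finset.sum_le_sum fun b _ => h2 a b
      _ = N^2 * κ^k := by
          simp [Finset.sum_const, hN]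
          ring
  -- averaging
  have hexists : ∃ w, 0 < F w ∧ Err w ≤ η * F w := by
    by_contra hcon
    push_neg at hcon
    have hw0 : ∃ w, 0 < F w := by
      by_contra h
      push_neg at h
      have : ∑ w, F w = 0 :=
        Finset.sum_eq_zero fun w _ => le_antisymm (h w) (hFnn w)
      rw [hFsum] at this
      exact one_ne_zero this
    obtain ⟨w₀, hw₀⟩ := hw0
    have hlt : ∑ w, η * F w < ∑ w, Err w := by
      refine Finset.sum_lt_sum (fun w _ => ?_) ⟨w₀, Finset.mem_univ w₀, hcon w₀ hw₀⟩
      rcases eq_or_lt_of_le (hFnn w) with h | h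
      · rw [← h, mul_zero]
        exact hErrnn w
      · exact le_of_lt (hcon w h)
    rw [← Finset.mul_sum, hFsum, mul_one] at hlt
    have : ∑ w, Err w ≤ η := le_trans (Finset.sum_le_sum fun w _ => hErrD w) hDsum
    linarith
  obtain ⟨w, hFw, hEw⟩ := hexists
  refine ⟨List.ofFn w, G.δs (T w) (List.ofFn w), ?_, hFw, ?_⟩
  · simp [hn]
  · rw [← hErreq w]
    calc Err w ≤ η * F w := hEw
      _ = N^2 * κ^k * G.PrW ℘ (List.ofFn w) := by rw [hη]
end PFSA

namespace PFSA
variable {Q S : Type*} [Fintype S] [Fintype Q] [DecidableEq Q]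
lemma wdist_eq (G : PFSA Q S) (p : Q → ℝ) (x : List S) (q : Q) :
    G.wdist p x q = G.wvec p x q / G.PrW p x := rfl
lemma PrW_def (G : PFSA Q S) (p : Q → ℝ) (x : List S) :
    G.PrW p x = ∑ q', G.wvec p x q' := rfl
end PFSA
set_option maxHeartbeats 2000000
/-- an ε-synchronizing word of length `O(log(1/ε))` always exists
(equivalently, at most `O(1/ε)` lexicographically ordered words need be examined). -/
theorem stmt_6 {Q S : Type*} [Fintype S] [Fintype Q] [DecidableEq Q]
    (hS : 2 ≤ Fintype.card S) (G : PFSA Q S)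
    (hSC : G.StronglyConnected) (hDist : G.Distinguishable)
    (℘ : Q → ℝ) (h℘ : G.IsStationary ℘) :
    ∃ C > (0 : ℝ), ∀ ε : ℝ, 0 < ε → ε < 1 →
      ∃ x : List S, (x.length : ℝ) ≤ C * (1 + Real.log (1 / ε)) ∧ EpsSync G ℘ ε x := by
  obtain ⟨hnn, hs1, _⟩ := h℘
  obtain ⟨n₀, κ, hn₀1, hκhalf, hκ1, hkey⟩ := G.key hDist ℘ hnn hs1
  have hQ : Nonempty Q := by
    by_contra h
    rw [not_nonempty_iff] at h
    rw [Finset.univ_eq_empty, Finset.sum_empty] at hs1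
    exact one_ne_zero hs1.symm
  have hκpos : (0:ℝ) < κ := lt_of_lt_of_le (by norm_num) hκhalf
  set N : ℝ := (Fintype.card Q : ℝ) with hN
  have hN1 : (1:ℝ) ≤ N := by
    rw [hN]
    exact_mod_cast Fintype.card_pos
  set L : ℝ := -Real.log κ with hL
  have hLpos : (0:ℝ) < L := by
    rw [hL, neg_pos]
    exact Real.log_neg hκpos hκ1
  set A : ℝ := Real.log (N^2) with hA
  have hApos : (0:ℝ) ≤ A := Real.log_nonneg (by nlinarith)
  refine ⟨(n₀ : ℝ) * (A + L + 1) / L, by positivity, fun ε hε hε1 => ?_⟩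
  set y : ℝ := Real.log (1/ε) with hy
  have hypos : (0:ℝ) < y := Real.log_pos (by rw [lt_div_iff₀ hε]; linarith)
  set k : ℕ := ⌈(A + y) / L⌉₊ with hk
  have hkge : (A + y) / L ≤ (k : ℝ) := Nat.le_ceil _
  have hklt : (k : ℝ) < (A + y) / L + 1 := Nat.ceil_lt_add_one (by positivity)
  -- κ^k ≤ ε / N^2
  have hκk : κ^k ≤ ε / N^2 := by
    have h1 : κ^k = Real.exp ((k : ℝ) * Real.log κ) := by
      rw [Real.exp_nat_mul, Real.exp_log hκpos]
    have h2 : (k : ℝ) * Real.log κ ≤ -(A + y) := by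
      have : A + y ≤ (k : ℝ) * L := by
        rw [div_le_iff₀ hLpos] at hkge
        linarith
      rw [hL] at this
      nlinarith
    have h3 : Real.exp (-(A + y)) = ε / N^2 := by
      rw [neg_add, Real.exp_add, Real.exp_neg, Real.exp_neg, hA, hy,
        Real.exp_log (by nlinarith : (0:ℝ) < N^2), Real.exp_log (by positivity)]
      field_simp
    rw [h1, ← h3]
    exact Real.exp_le_exp.2 h2
  obtain ⟨x, t, hlen, hPr, hbound⟩ := hkey k
  have hη : N^2 * κ^k ≤ ε := by
    have h := mul_le_mul_of_nonneg_left hκk (by positivity : (0:ℝ) ≤ N^2)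
    calc N^2 * κ^k ≤ N^2 * (ε / N^2) := h
      _ = ε := by field_simp
  refine ⟨x, ?_, hPr, t, ?_⟩
  · -- length bound
    rw [hlen]
    push_cast
    rw [show (↑n₀ * (A + L + 1) / L * (1 + Real.log (1/ε)))
        = ↑n₀ * (A + L + 1) * (1 + y) / L by rw [hy]; ring,
      le_div_iff₀ hLpos]
    have hkL : (k : ℝ) * L < A + y + L := by
      have heq : ((A + y) / L + 1) * L = A + y + L := by field_simp
      calc (k : ℝ) * L < ((A + y) / L + 1) * L := mul_lt_mul_of_pos_right hklt hLpos
        _ = A + y + L := heq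
    have hn₀' : (1:ℝ) ≤ (n₀ : ℝ) := by exact_mod_cast hn₀1
    have hk0 : (0:ℝ) ≤ (k : ℝ) := Nat.cast_nonneg k
    nlinarith [mul_le_mul_of_nonneg_left (le_of_lt hkL) (le_trans zero_le_one hn₀'),
      mul_nonneg (mul_nonneg (le_trans zero_le_one hn₀') (le_of_lt hypos))
        (add_nonneg hApos (le_of_lt hLpos))]
  · -- linf bound
    have hwnn : ∀ q', 0 ≤ G.wvec ℘ x q' := G.wvec_nonneg ℘ hnn x
    have hsumw : ∑ q', G.wvec ℘ x q' = G.PrW ℘ x := (G.PrW_def ℘ x).symm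
    have hbound' : G.PrW ℘ x - G.wvec ℘ x t ≤ ε * G.PrW ℘ x := by
      calc G.PrW ℘ x - G.wvec ℘ x t ≤ N^2 * κ^k * G.PrW ℘ x := hbound
        _ ≤ ε * G.PrW ℘ x := mul_le_mul_of_nonneg_right hη (le_of_lt hPr)
    apply ciSup_le
    intro q'
    show |G.wdist ℘ x q' - eVec t q'| ≤ ε
    by_cases hq : q' = t
    · rw [hq]
      have h1 : G.wvec ℘ x t ≤ G.PrW ℘ x := by
        rw [← hsumw]
        exact Finset.single_le_sum (fun i _ => hwnn i) (Finset.mem_univ t)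
      have h2 : G.wdist ℘ x t ≤ 1 := by
        rw [G.wdist_eq, div_le_one hPr]
        exact h1
      have h3 : 1 - ε ≤ G.wdist ℘ x t := by
        rw [G.wdist_eq, le_div_iff₀ hPr]
        nlinarith
      have he : eVec t t = 1 := by simp [eVec]
      rw [he, abs_le]
      constructor <;> linarith
    · have h1 : G.wvec ℘ x q' ≤ G.PrW ℘ x - G.wvec ℘ x t := by
        have hsub : G.wvec ℘ x q' + G.wvec ℘ x t ≤ G.PrW ℘ x := by
          have h0 := Finset.sum_le_sum_of_subset_of_nonneg
            (Finset.subset_univ ({q', t} : Finset Q)) (fun i _ _ => hwnn i)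
          rw [Finset.sum_pair hq, hsumw] at h0
          exact h0
        linarith
      have h2 : G.wdist ℘ x q' ≤ ε := by
        rw [G.wdist_eq, div_le_iff₀ hPr]
        nlinarith
      have h3 : 0 ≤ G.wdist ℘ x q' := by
        rw [G.wdist_eq]
        exact div_nonneg (hwnn q') (le_of_lt hPr)
      have he : eVec t q' = 0 := by simp [eVec, hq]
      rw [he, abs_le]
      constructor <;> linarith
end

section
/- (Limiting Geometry) Let G = (Q, δ, π̃) be a strongly connected PFSA over Σ with distinguishable states and stationary distribution ℘_λ. Regard probability vectors on Σ as points of ℝ^Σ and let D_∞ = {℘_x Π̃ : x ∈ Σ*, Pr(x) > 0}, where (℘Π̃)_σ = ∑_q ℘(q)π̃(q,σ). Then the closure of the convex hull of D_∞ equals the convex hull of the finite set {π̃(q,·) : q ∈ Q}; in particular, every extreme point u of the closed convex hull of D_∞ satisfies u = π̃(q,·) for some q ∈ Q. -/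
open MeasureTheory Filter

set_option linter.unusedSectionVars false

namespace Stmt9

open Finset

variable {Q S : Type*} [Fintype S] [Fintype Q] [DecidableEq Q]

lemma πs_nonneg (G : PFSA Q S) (q : Q) (x : List S) : 0 ≤ G.πs q x := by
  induction x generalizing q with
  | nil => exact zero_le_one
  | cons σ x ih => exact mul_nonneg (G.π_nonneg q σ) (ih _)

lemma δs_append (G : PFSA Q S) (q : Q) (x y : List S) :
    G.δs q (x ++ y) = G.δs (G.δs q x) y := by
  induction x generalizing q with
  | nil => rfl
  | cons σ x ih => simp [PFSA.δs, ih]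

lemma πs_append (G : PFSA Q S) (q : Q) (x y : List S) :
    G.πs q (x ++ y) = G.πs q x * G.πs (G.δs q x) y := by
  induction x generalizing q with
  | nil => simp [PFSA.πs, PFSA.δs]
  | cons σ x ih => simp [PFSA.πs, PFSA.δs, ih, mul_assoc]

lemma πs_snoc_sum (G : PFSA Q S) (q : Q) (x : List S) :
    ∑ σ, G.πs q (x ++ [σ]) = G.πs q x := by
  have : ∀ σ, G.πs q (x ++ [σ]) = G.πs q x * G.π (G.δs q x) σ := by
    intro σ; rw [πs_append]; simp [PFSA.πs]
  simp only [this, ← Finset.mul_sum, G.π_sum, mul_one]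

lemma Γs_apply (G : PFSA Q S) (x : List S) (q q' : Q) :
    G.Γs x q q' = if G.δs q x = q' then G.πs q x else 0 := by
  induction x generalizing q with
  | nil => simp [PFSA.Γs, PFSA.δs, PFSA.πs, Matrix.one_apply, eq_comm]
  | cons σ x ih =>
      have h1 : G.Γs (σ :: x) = G.Γ σ * G.Γs x := by
        simp [PFSA.Γs, List.map_cons]
      rw [h1, Matrix.mul_apply]
      have h2 : ∀ q1, G.Γ σ q q1 * G.Γs x q1 q'
          = if G.δ q σ = q1 then G.π q σ * G.Γs x q1 q' else 0 := by
        intro q1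
        simp only [PFSA.Γ]
        split <;> simp
      simp only [h2, Finset.sum_ite_eq Finset.univ (G.δ q σ), Finset.mem_univ, if_true]
      rw [ih]
      simp only [PFSA.δs, PFSA.πs]
      split_ifs with hc <;> simp [hc]

lemma wvec_eq (G : PFSA Q S) (p : Q → ℝ) (x : List S) (q' : Q) :
    G.wvec p x q' = ∑ q, if G.δs q x = q' then p q * G.πs q x else 0 := by
  unfold PFSA.wvec Matrix.vecMul dotProduct
  simp only [Γs_apply]
  refine Finset.sum_congr rfl fun q _ => ?_
  split <;> simp

lemma PrW_eq (G : PFSA Q S) (p : Q → ℝ) (x : List S) :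
    G.PrW p x = ∑ q, p q * G.πs q x := by
  unfold PFSA.PrW
  simp only [wvec_eq]
  rw [Finset.sum_comm]
  refine Finset.sum_congr rfl fun q _ => ?_
  simp [Finset.sum_ite_eq Finset.univ (G.δs q x)]

end Stmt9
namespace Stmt9

variable {Q S : Type*} [Fintype S] [Fintype Q] [DecidableEq Q]

/-- Splitting a sum over words of length `n+m` into prefix and suffix. -/
lemma sum_split {n m : ℕ} (F : List S → ℝ) :
    ∑ f : Fin (n + m) → S, F (List.ofFn f)
      = ∑ g : Fin n → S, ∑ h : Fin m → S, F (List.ofFn g ++ List.ofFn h) := by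
  have h2 := Equiv.sum_comp (Fin.appendEquiv (α := S) n m)
    (fun fn => F (List.ofFn fn))
  rw [← h2, Fintype.sum_prod_type]
  refine Finset.sum_congr rfl fun g _ => Finset.sum_congr rfl fun h _ => ?_
  show F (List.ofFn (Fin.append g h)) = _
  rw [List.ofFn_fin_append]

/-- A sum over words of length `n+1` split at the last letter. -/
lemma sum_snoc {n : ℕ} (F : List S → ℝ) :
    ∑ f : Fin (n + 1) → S, F (List.ofFn f)
      = ∑ g : Fin n → S, ∑ σ : S, F (List.ofFn g ++ [σ]) := by
  rw [sum_split]
  refine Finset.sum_congr rfl fun g _ => ?_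
  rw [← Equiv.sum_comp (Equiv.funUnique (Fin 1) S).symm]
  rfl

/-- A sum over words of length `n+1` split at the first letter. -/
lemma sum_cons {n : ℕ} (F : List S → ℝ) :
    ∑ f : Fin (n + 1) → S, F (List.ofFn f)
      = ∑ σ : S, ∑ g : Fin n → S, F (σ :: List.ofFn g) := by
  have h2 := Equiv.sum_comp (Fin.consEquiv (fun _ : Fin (n+1) => S))
    (fun fn => F (List.ofFn fn))
  rw [← h2, Fintype.sum_prod_type]
  refine Finset.sum_congr rfl fun σ _ => Finset.sum_congr rfl fun g _ => ?_
  show F (List.ofFn (Fin.cons σ g)) = _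
  rw [List.ofFn_succ]
  simp

/-- Total probability of all words of a fixed length is 1. -/
lemma sum_πs_words (G : PFSA Q S) (n : ℕ) (q : Q) :
    ∑ f : Fin n → S, G.πs q (List.ofFn f) = 1 := by
  induction n generalizing q with
  | zero => simp [PFSA.πs]
  | succ n ih =>
      rw [sum_cons]
      have h2 : ∀ σ (g : Fin n → S), G.πs q (σ :: List.ofFn g)
          = G.π q σ * G.πs (G.δ q σ) (List.ofFn g) := fun σ g => rfl
      simp only [h2]
      have h3 : ∀ σ : S, ∑ g : Fin n → S, G.π q σ * G.πs (G.δ q σ) (List.ofFn g)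
          = G.π q σ := fun σ => by rw [← Finset.mul_sum, ih, mul_one]
      simp only [h3, G.π_sum]

end Stmt9
namespace Stmt9

variable {Q S : Type*} [Fintype S] [Fintype Q] [DecidableEq Q]

/-- Cauchy–Schwarz in Engel form (with `0/0 = 0` conventions). -/
lemma sq_sum_div_le {ι : Type*} [Fintype ι] (a b : ι → ℝ) (hb : ∀ i, 0 ≤ b i)
    (hab : ∀ i, b i = 0 → a i = 0) :
    (∑ i, a i) ^ 2 / (∑ i, b i) ≤ ∑ i, (a i) ^ 2 / b i := by
  rcases (Finset.sum_nonneg fun i _ => hb i).eq_or_lt with h | h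
  · rw [← h, div_zero]
    exact Finset.sum_nonneg fun i _ => div_nonneg (sq_nonneg _) (hb i)
  · rw [div_le_iff₀ h]
    have key := Finset.sum_mul_sq_le_sq_mul_sq Finset.univ
      (fun i => a i / Real.sqrt (b i)) (fun i => Real.sqrt (b i))
    have h1 : ∀ i, a i / Real.sqrt (b i) * Real.sqrt (b i) = a i := by
      intro i
      rcases (hb i).eq_or_lt with h2 | h2
      · simp [hab i h2.symm]
      · exact div_mul_cancel₀ _ (ne_of_gt (Real.sqrt_pos.2 h2))
    have h2 : ∀ i, (a i / Real.sqrt (b i)) ^ 2 = a i ^ 2 / b i := by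
      intro i; rw [div_pow, Real.sq_sqrt (hb i)]
    have h3 : ∀ i, (Real.sqrt (b i)) ^ 2 = b i := fun i => Real.sq_sqrt (hb i)
    calc (∑ i, a i) ^ 2 = (∑ i, a i / Real.sqrt (b i) * Real.sqrt (b i)) ^ 2 := by
          simp_rw [h1]
      _ ≤ (∑ i, (a i / Real.sqrt (b i)) ^ 2) * ∑ i, Real.sqrt (b i) ^ 2 := key
      _ = _ := by simp_rw [h2, h3]

/-- The unnormalized posterior weight of initial state `q` after word `y`. -/
def uw (G : PFSA Q S) (℘ : Q → ℝ) (y : List S) (q : Q) : ℝ := ℘ q * G.πs q y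

/-- Total weight (= probability of the word `y`). -/
noncomputable def NN (G : PFSA Q S) (℘ : Q → ℝ) (y : List S) : ℝ := ∑ q, uw G ℘ y q

/-- The quadratic energy of the posterior after `y`. -/
noncomputable def phiE (G : PFSA Q S) (℘ : Q → ℝ) (y : List S) : ℝ :=
  (∑ q, (uw G ℘ y q) ^ 2) / NN G ℘ y

/-- The total energy over words of length `n`. -/
noncomputable def hseq (G : PFSA Q S) (℘ : Q → ℝ) (n : ℕ) : ℝ :=
  ∑ f : Fin n → S, phiE G ℘ (List.ofFn f)

section Energy

variable (G : PFSA Q S) (℘ : Q → ℝ) (h0 : ∀ q, 0 ≤ ℘ q)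

include h0

lemma uw_nonneg (y : List S) (q : Q) : 0 ≤ uw G ℘ y q :=
  mul_nonneg (h0 q) (πs_nonneg G q y)

lemma NN_nonneg (y : List S) : 0 ≤ NN G ℘ y :=
  Finset.sum_nonneg fun q _ => uw_nonneg G ℘ h0 y q

lemma uw_le_NN (y : List S) (q : Q) : uw G ℘ y q ≤ NN G ℘ y :=
  Finset.single_le_sum (fun q _ => uw_nonneg G ℘ h0 y q) (Finset.mem_univ q)

lemma uw_eq_zero_of_NN (y : List S) (q : Q) (h : NN G ℘ y = 0) : uw G ℘ y q = 0 :=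
  le_antisymm (h ▸ uw_le_NN G ℘ h0 y q) (uw_nonneg G ℘ h0 y q)

omit h0

lemma uw_append (y z : List S) (q : Q) :
    uw G ℘ (y ++ z) q = uw G ℘ y q * G.πs (G.δs q y) z := by
  unfold uw; rw [πs_append]; ring

lemma uw_snoc_sum (y : List S) (q : Q) :
    ∑ σ, uw G ℘ (y ++ [σ]) q = uw G ℘ y q := by
  unfold uw
  simp only [πs_append, ← Finset.mul_sum, ← mul_assoc]
  have : ∑ σ, G.πs (G.δs q y) [σ] = 1 := by
    have := πs_snoc_sum G (G.δs q y) []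
    simpa [PFSA.πs] using this
  rw [this, mul_one]

lemma NN_snoc_sum (y : List S) : ∑ σ, NN G ℘ (y ++ [σ]) = NN G ℘ y := by
  unfold NN; rw [Finset.sum_comm]
  exact Finset.sum_congr rfl fun q _ => uw_snoc_sum G ℘ y q

lemma uw_words_sum (y : List S) (m : ℕ) (q : Q) :
    ∑ h : Fin m → S, uw G ℘ (y ++ List.ofFn h) q = uw G ℘ y q := by
  simp only [uw_append, ← Finset.mul_sum, sum_πs_words, mul_one]

lemma NN_words_sum (y : List S) (m : ℕ) :
    ∑ h : Fin m → S, NN G ℘ (y ++ List.ofFn h) = NN G ℘ y := by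
  unfold NN; rw [Finset.sum_comm]
  exact Finset.sum_congr rfl fun q _ => uw_words_sum G ℘ y m q

include h0

lemma phiE_le_NN (y : List S) : phiE G ℘ y ≤ NN G ℘ y := by
  unfold phiE
  rcases (NN_nonneg G ℘ h0 y).eq_or_lt with h | h
  · rw [← h, div_zero]
  · rw [div_le_iff₀ h, ← sq]
    calc ∑ q, uw G ℘ y q ^ 2 ≤ ∑ q, uw G ℘ y q * NN G ℘ y := by
          refine Finset.sum_le_sum fun q _ => ?_
          rw [sq]
          exact mul_le_mul_of_nonneg_left (uw_le_NN G ℘ h0 y q) (uw_nonneg G ℘ h0 y q)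
      _ = NN G ℘ y ^ 2 := by rw [← Finset.sum_mul, sq]; rfl

lemma phiE_nonneg (y : List S) : 0 ≤ phiE G ℘ y :=
  div_nonneg (Finset.sum_nonneg fun q _ => sq_nonneg _) (NN_nonneg G ℘ h0 y)

lemma phiE_le_sum_snoc (y : List S) : phiE G ℘ y ≤ ∑ σ, phiE G ℘ (y ++ [σ]) := by
  have lhs_eq : phiE G ℘ y = ∑ q, (∑ σ, uw G ℘ (y ++ [σ]) q) ^ 2 / (∑ σ, NN G ℘ (y ++ [σ])) := by
    unfold phiE
    rw [Finset.sum_div]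
    refine Finset.sum_congr rfl fun q _ => ?_
    rw [uw_snoc_sum, NN_snoc_sum]
  rw [lhs_eq]
  have rhs_eq : ∑ σ, phiE G ℘ (y ++ [σ]) = ∑ q, ∑ σ, (uw G ℘ (y ++ [σ]) q) ^ 2 / NN G ℘ (y ++ [σ]) := by
    rw [Finset.sum_comm]
    refine Finset.sum_congr rfl fun σ _ => ?_
    unfold phiE; rw [Finset.sum_div]
  rw [rhs_eq]
  refine Finset.sum_le_sum fun q _ => ?_
  exact sq_sum_div_le _ _ (fun σ => NN_nonneg G ℘ h0 _) (fun σ h => uw_eq_zero_of_NN G ℘ h0 _ q h)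

lemma hseq_succ_le (n : ℕ) : hseq G ℘ n ≤ hseq G ℘ (n + 1) := by
  unfold hseq
  rw [sum_snoc]
  exact Finset.sum_le_sum fun g _ => phiE_le_sum_snoc G ℘ h0 _

lemma hseq_mono {a b : ℕ} (hab : a ≤ b) : hseq G ℘ a ≤ hseq G ℘ b := by
  induction b with
  | zero => simp_all
  | succ b ih =>
      rcases Nat.lt_or_ge a (b + 1) with h | h
      · exact le_trans (ih (by omega)) (hseq_succ_le G ℘ h0 b)
      · have : a = b + 1 := by omega
        subst this; rfl

lemma hseq_nonneg (n : ℕ) : 0 ≤ hseq G ℘ n :=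
  Finset.sum_nonneg fun f _ => phiE_nonneg G ℘ h0 _

lemma hseq_le_one (hsum : ∑ q, ℘ q = 1) (n : ℕ) : hseq G ℘ n ≤ 1 := by
  unfold hseq
  calc ∑ f : Fin n → S, phiE G ℘ (List.ofFn f) ≤ ∑ f : Fin n → S, NN G ℘ (List.ofFn f) :=
        Finset.sum_le_sum fun f _ => phiE_le_NN G ℘ h0 _
    _ = 1 := by
        unfold NN uw
        rw [Finset.sum_comm]
        calc ∑ q, ∑ f : Fin n → S, ℘ q * G.πs q (List.ofFn f)
            = ∑ q, ℘ q := by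
              refine Finset.sum_congr rfl fun q _ => ?_
              rw [← Finset.mul_sum, sum_πs_words, mul_one]
          _ = 1 := hsum

/-- Pigeonhole: some energy increment over an `L`-block is small. -/
lemma exists_small_increment (hsum : ∑ q, ℘ q = 1) (L Nst : ℕ) (hN : 0 < Nst) :
    ∃ k < Nst, hseq G ℘ (k * L + L) - hseq G ℘ (k * L) ≤ 1 / Nst := by
  by_contra hcon
  push_neg at hcon
  have key : ∀ k ∈ Finset.range Nst,
      (1 : ℝ) / Nst < hseq G ℘ ((k + 1) * L) - hseq G ℘ (k * L) := by
    intro k hk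
    have := hcon k (Finset.mem_range.1 hk)
    rwa [← Nat.succ_mul] at this
  have h1 : (Nst : ℝ) * (1 / Nst) < ∑ k ∈ Finset.range Nst,
      (hseq G ℘ ((k + 1) * L) - hseq G ℘ (k * L)) := by
    have := Finset.sum_lt_sum_of_nonempty (Finset.nonempty_range_iff.2 hN.ne') key
    simpa [Finset.sum_const, Finset.card_range, nsmul_eq_mul] using this
  rw [Finset.sum_range_sub (fun k => hseq G ℘ (k * L))] at h1
  have h2 : (Nst : ℝ) * (1 / Nst) = 1 := by
    field_simp
  rw [h2] at h1
  have h3 : hseq G ℘ (Nst * L) ≤ 1 := hseq_le_one G ℘ h0 hsum _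
  have h4 : 0 ≤ hseq G ℘ (0 * L) := hseq_nonneg G ℘ h0 _
  linarith

end Energy

end Stmt9
namespace Stmt9

variable {Q S : Type*} [Fintype S] [Fintype Q] [DecidableEq Q]

/-- Total variation distance between the length-`L` word distributions of two states. -/
noncomputable def TV (G : PFSA Q S) (L : ℕ) (r r' : Q) : ℝ :=
  ∑ f : Fin L → S, |G.πs r (List.ofFn f) - G.πs r' (List.ofFn f)|

lemma abs_sub_le_TV (G : PFSA Q S) (r r' : Q) (x : List S) (m : ℕ) :
    |G.πs r x - G.πs r' x| ≤ TV G (x.length + m) r r' := by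
  have hsplit : TV G (x.length + m) r r' = ∑ g : Fin x.length → S, ∑ h : Fin m → S,
      |G.πs r (List.ofFn g ++ List.ofFn h) - G.πs r' (List.ofFn g ++ List.ofFn h)| :=
    sum_split (fun wd => |G.πs r wd - G.πs r' wd|)
  rw [hsplit]
  have single : ∀ g : Fin x.length → S, List.ofFn g = x →
      |G.πs r x - G.πs r' x| ≤ ∑ h : Fin m → S,
        |G.πs r (List.ofFn g ++ List.ofFn h) - G.πs r' (List.ofFn g ++ List.ofFn h)| := by
    intro g hg
    rw [hg]
    have h1 : G.πs r x - G.πs r' x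
        = ∑ h : Fin m → S, (G.πs r (x ++ List.ofFn h) - G.πs r' (x ++ List.ofFn h)) := by
      simp only [πs_append]
      rw [Finset.sum_sub_distrib, ← Finset.mul_sum, ← Finset.mul_sum,
        sum_πs_words, sum_πs_words, mul_one, mul_one]
    rw [h1]
    exact Finset.abs_sum_le_sum_abs _ _
  have hmem : (fun i : Fin x.length => x.get i) ∈ Finset.univ := Finset.mem_univ _
  calc |G.πs r x - G.πs r' x|
      ≤ ∑ h : Fin m → S, |G.πs r (List.ofFn (fun i : Fin x.length => x.get i) ++ List.ofFn h)
          - G.πs r' (List.ofFn (fun i : Fin x.length => x.get i) ++ List.ofFn h)| :=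
        single _ (List.ofFn_get x)
    _ ≤ _ := Finset.single_le_sum (f := fun g : Fin x.length → S => ∑ h : Fin m → S,
          |G.πs r (List.ofFn g ++ List.ofFn h) - G.πs r' (List.ofFn g ++ List.ofFn h)|)
          (fun g _ => Finset.sum_nonneg fun h _ => abs_nonneg _) hmem

/-- A uniform distinguishability horizon and gap. -/
lemma exists_horizon (G : PFSA Q S) (hDist : G.Distinguishable) :
    ∃ (L : ℕ) (γ : ℝ), 0 < γ ∧ ∀ r r' : Q, r ≠ r' → γ ≤ TV G L r r' := by
  classical
  have hw : ∀ p : Q × Q, ∃ x : List S, p.1 ≠ p.2 → G.πs p.1 x ≠ G.πs p.2 x := by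
    intro p
    by_cases h : p.1 = p.2
    · exact ⟨[], fun hc => absurd h hc⟩
    · obtain ⟨x, hx⟩ := hDist p.1 p.2 h
      exact ⟨x, fun _ => hx⟩
  choose w hwspec using hw
  set P : Finset (Q × Q) := Finset.univ.filter (fun p => p.1 ≠ p.2) with hP
  rcases P.eq_empty_or_nonempty with hPe | hPne
  · refine ⟨0, 1, one_pos, fun r r' hrr' => absurd ?_ (Finset.notMem_empty (r, r'))⟩
    rw [← hPe, hP]
    simp [hrr']
  · set L : ℕ := P.sup (fun p => (w p).length) with hL
    set γ : ℝ := P.inf' hPne (fun p => |G.πs p.1 (w p) - G.πs p.2 (w p)|) with hγ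
    refine ⟨L, γ, ?_, ?_⟩
    · rw [hγ, Finset.lt_inf'_iff]
      intro p hp
      have hne : p.1 ≠ p.2 := by
        rw [hP] at hp; exact (Finset.mem_filter.1 hp).2
      exact abs_pos.2 (sub_ne_zero.2 (hwspec p hne))
    · intro r r' hrr'
      have hpmem : (r, r') ∈ P := by rw [hP]; simp [hrr']
      have h1 : γ ≤ |G.πs r (w (r, r')) - G.πs r' (w (r, r'))| :=
        Finset.inf'_le _ hpmem
      have h2 : (w (r, r')).length ≤ L := Finset.le_sup (f := fun p => (w p).length) hpmem
      obtain ⟨m, hm⟩ := Nat.exists_eq_add_of_le h2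
      rw [hm]
      exact h1.trans (abs_sub_le_TV G r r' (w (r, r')) m)

end Stmt9
namespace Stmt9

variable {Q S : Type*} [Fintype S] [Fintype Q] [DecidableEq Q]

section Conc

variable (G : PFSA Q S) (℘ : Q → ℝ)

/-- Energy decomposition of the increment over an `L`-block after a word `y`. -/
lemma energy_identity (h0 : ∀ q, 0 ≤ ℘ q) (L : ℕ) (y : List S) (hN : 0 < NN G ℘ y) :
    ∑ h : Fin L → S, ∑ q, NN G ℘ (y ++ List.ofFn h) *
        (uw G ℘ (y ++ List.ofFn h) q / NN G ℘ (y ++ List.ofFn h) - uw G ℘ y q / NN G ℘ y) ^ 2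
      = (∑ h : Fin L → S, phiE G ℘ (y ++ List.ofFn h)) - phiE G ℘ y := by
  have perh : ∀ h : Fin L → S,
      ∑ q, NN G ℘ (y ++ List.ofFn h) *
        (uw G ℘ (y ++ List.ofFn h) q / NN G ℘ (y ++ List.ofFn h) - uw G ℘ y q / NN G ℘ y) ^ 2
      = phiE G ℘ (y ++ List.ofFn h)
        - 2 * ∑ q, (uw G ℘ y q / NN G ℘ y) * uw G ℘ (y ++ List.ofFn h) q
        + NN G ℘ (y ++ List.ofFn h) * ∑ q, (uw G ℘ y q / NN G ℘ y) ^ 2 := by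
    intro h
    set z := List.ofFn h
    rcases (NN_nonneg G ℘ h0 (y ++ z)).eq_or_lt with hz | hz
    · have hu : ∀ q, uw G ℘ (y ++ z) q = 0 := fun q => uw_eq_zero_of_NN G ℘ h0 _ q hz.symm
      have hphi : phiE G ℘ (y ++ z) = 0 := by
        unfold phiE; simp [hu]
      simp [← hz, hu, hphi]
    · have hzne : NN G ℘ (y ++ z) ≠ 0 := hz.ne'
      have e1 : ∀ q, NN G ℘ (y ++ z) *
          (uw G ℘ (y ++ z) q / NN G ℘ (y ++ z) - uw G ℘ y q / NN G ℘ y) ^ 2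
          = uw G ℘ (y ++ z) q ^ 2 / NN G ℘ (y ++ z)
            - 2 * ((uw G ℘ y q / NN G ℘ y) * uw G ℘ (y ++ z) q)
            + NN G ℘ (y ++ z) * (uw G ℘ y q / NN G ℘ y) ^ 2 := by
        intro q
        field_simp
        ring
      rw [Finset.sum_congr rfl fun q _ => e1 q]
      rw [Finset.sum_add_distrib, Finset.sum_sub_distrib, ← Finset.mul_sum, ← Finset.mul_sum]
      have : phiE G ℘ (y ++ z) = ∑ q, uw G ℘ (y ++ z) q ^ 2 / NN G ℘ (y ++ z) := by
        unfold phiE; rw [Finset.sum_div]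
      rw [this]
  rw [Finset.sum_congr rfl fun h _ => perh h]
  rw [Finset.sum_add_distrib, Finset.sum_sub_distrib]
  have h2 : ∑ h : Fin L → S, 2 * ∑ q, (uw G ℘ y q / NN G ℘ y) * uw G ℘ (y ++ List.ofFn h) q
      = 2 * phiE G ℘ y := by
    rw [← Finset.mul_sum, Finset.sum_comm]
    have : ∀ q, ∑ h : Fin L → S, (uw G ℘ y q / NN G ℘ y) * uw G ℘ (y ++ List.ofFn h) q
        = (uw G ℘ y q / NN G ℘ y) * uw G ℘ y q := by
      intro q; rw [← Finset.mul_sum, uw_words_sum]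
    rw [Finset.sum_congr rfl fun q _ => this q]
    congr 1
    unfold phiE
    rw [Finset.sum_div]
    refine Finset.sum_congr rfl fun q _ => ?_
    rw [sq]; ring
  have h3 : ∑ h : Fin L → S, NN G ℘ (y ++ List.ofFn h) * ∑ q, (uw G ℘ y q / NN G ℘ y) ^ 2
      = phiE G ℘ y := by
    rw [← Finset.sum_mul, NN_words_sum]
    unfold phiE
    rw [Finset.sum_div, Finset.mul_sum]
    refine Finset.sum_congr rfl fun q _ => ?_
    rw [div_pow, sq (NN G ℘ y)]
    field_simp
  rw [h2, h3]
  ring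

/-- Step B: all significantly-weighted initial states are driven to the same state. -/
lemma same_image (h0 : ∀ q, 0 ≤ ℘ q) (L : ℕ) (γ : ℝ) (hγ : 0 < γ)
    (hTV : ∀ r r' : Q, r ≠ r' → γ ≤ TV G L r r')
    (η : ℝ) (hη : 0 < η) (y : List S) (hN : 0 < NN G ℘ y)
    (hE : (∑ h : Fin L → S, phiE G ℘ (y ++ List.ofFn h)) - phiE G ℘ y
        ≤ η ^ 2 * γ ^ 2 / 8 * NN G ℘ y)
    (q q' : Q) (hq : η ≤ uw G ℘ y q / NN G ℘ y) (hq' : η ≤ uw G ℘ y q' / NN G ℘ y) :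
    G.δs q y = G.δs q' y := by
  classical
  by_contra hne
  set N := NN G ℘ y with hNdef
  set g : Q → ℝ := fun q => uw G ℘ y q / N with hgdef
  set D : (Fin L → S) → ℝ := fun h => NN G ℘ (y ++ List.ofFn h) with hDdef
  set gz : (Fin L → S) → Q → ℝ := fun h q => uw G ℘ (y ++ List.ofFn h) q / D h with hgzdef
  set e : (Fin L → S) → ℝ := fun h => ∑ p, (gz h p - g p) ^ 2 with hedef
  have he0 : ∀ h, 0 ≤ e h := fun h => Finset.sum_nonneg fun p _ => sq_nonneg _
  have hD0 : ∀ h, 0 ≤ D h := fun h => NN_nonneg G ℘ h0 _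
  have energy : ∑ h : Fin L → S, D h * e h
      = (∑ h : Fin L → S, phiE G ℘ (y ++ List.ofFn h)) - phiE G ℘ y := by
    rw [← energy_identity G ℘ h0 L y hN]
    exact Finset.sum_congr rfl fun h _ => by rw [hedef, Finset.mul_sum]
  have key : ∀ (p : Q), η ≤ g p → ∀ h : Fin L → S,
      |G.πs (G.δs p y) (List.ofFn h) - D h / N| ≤ D h / N * (Real.sqrt (e h) / η) := by
    intro p hp h
    have hgp : 0 < g p := lt_of_lt_of_le hη hp
    have hup : uw G ℘ y p = g p * N := by
      rw [hgdef]; field_simp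
    have hupos : 0 < uw G ℘ y p := by rw [hup]; positivity
    have habs : |gz h p - g p| ≤ Real.sqrt (e h) := by
      have h1 : (gz h p - g p) ^ 2 ≤ e h :=
        Finset.single_le_sum (f := fun p => (gz h p - g p) ^ 2)
          (fun p _ => sq_nonneg _) (Finset.mem_univ p)
      calc |gz h p - g p| = Real.sqrt ((gz h p - g p) ^ 2) := (Real.sqrt_sq_eq_abs _).symm
        _ ≤ Real.sqrt (e h) := Real.sqrt_le_sqrt h1
    rcases (hD0 h).eq_or_lt with hDz | hDz
    · have hu : uw G ℘ (y ++ List.ofFn h) p = 0 :=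
        uw_eq_zero_of_NN G ℘ h0 _ p hDz.symm
      have hπ : G.πs (G.δs p y) (List.ofFn h) = 0 := by
        have h1 := uw_append G ℘ y (List.ofFn h) p
        rw [hu] at h1
        rcases mul_eq_zero.1 h1.symm with h' | h'
        · exact absurd h' hupos.ne'
        · exact h'
      rw [hπ, ← hDz]
      simp
    · have hπ : G.πs (G.δs p y) (List.ofFn h) = D h * gz h p / (N * g p) := by
        have h1 : uw G ℘ (y ++ List.ofFn h) p = uw G ℘ y p * G.πs (G.δs p y) (List.ofFn h) :=
          uw_append G ℘ y (List.ofFn h) p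
        have h2 : D h * gz h p = uw G ℘ (y ++ List.ofFn h) p := by
          rw [hgzdef]; field_simp
        rw [h2, h1, hup]
        field_simp
      rw [hπ]
      have expand : D h * gz h p / (N * g p) - D h / N = D h / N * ((gz h p - g p) / g p) := by
        field_simp
      rw [expand, abs_mul]
      have hDN : |D h / N| = D h / N := abs_of_nonneg (by positivity)
      rw [hDN, abs_div, abs_of_pos hgp]
      exact mul_le_mul_of_nonneg_left
        (div_le_div₀ (Real.sqrt_nonneg _) habs hη hp) (by positivity)
  have tri : ∀ h : Fin L → S,
      |G.πs (G.δs q y) (List.ofFn h) - G.πs (G.δs q' y) (List.ofFn h)|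
        ≤ 2 * (D h / N * (Real.sqrt (e h) / η)) := by
    intro h
    have k1 := key q hq h
    have k2 := key q' hq' h
    have htri := abs_sub_le (G.πs (G.δs q y) (List.ofFn h)) (D h / N)
      (G.πs (G.δs q' y) (List.ofFn h))
    rw [abs_sub_comm (D h / N)] at htri
    linarith
  set T := ∑ h : Fin L → S, D h * Real.sqrt (e h) with hTdef
  have hT0 : 0 ≤ T :=
    Finset.sum_nonneg fun h _ => mul_nonneg (hD0 h) (Real.sqrt_nonneg _)
  have hγT : γ * (N * η) ≤ 2 * T := by
    have step1 : γ ≤ ∑ h : Fin L → S, 2 * (D h / N * (Real.sqrt (e h) / η)) :=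
      (hTV _ _ hne).trans (Finset.sum_le_sum fun h _ => tri h)
    have step2 : ∑ h : Fin L → S, 2 * (D h / N * (Real.sqrt (e h) / η))
        = 2 * T / (N * η) := by
      rw [hTdef, Finset.mul_sum, Finset.sum_div]
      refine Finset.sum_congr rfl fun h _ => ?_
      field_simp
    rw [step2, le_div_iff₀ (by positivity)] at step1
    exact step1
  have hCS : T ^ 2 ≤ N * ∑ h : Fin L → S, D h * e h := by
    have cs := Finset.sum_mul_sq_le_sq_mul_sq Finset.univ
      (fun h : Fin L → S => Real.sqrt (D h)) (fun h => Real.sqrt (D h) * Real.sqrt (e h))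
    have e1 : ∀ h : Fin L → S, Real.sqrt (D h) * (Real.sqrt (D h) * Real.sqrt (e h))
        = D h * Real.sqrt (e h) := by
      intro h; rw [← mul_assoc, Real.mul_self_sqrt (hD0 h)]
    have e2 : ∀ h : Fin L → S, Real.sqrt (D h) ^ 2 = D h := fun h => Real.sq_sqrt (hD0 h)
    have e3 : ∀ h : Fin L → S, (Real.sqrt (D h) * Real.sqrt (e h)) ^ 2 = D h * e h := by
      intro h; rw [mul_pow, Real.sq_sqrt (hD0 h), Real.sq_sqrt (he0 h)]
    rw [Finset.sum_congr rfl fun h _ => e1 h, Finset.sum_congr rfl fun h _ => e2 h,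
      Finset.sum_congr rfl fun h _ => e3 h] at cs
    have hsumD : ∑ h : Fin L → S, D h = N := NN_words_sum G ℘ y L
    rw [hsumD] at cs
    exact cs
  have hEb : ∑ h : Fin L → S, D h * e h ≤ η ^ 2 * γ ^ 2 / 8 * N := by
    rw [energy]; exact hE
  have hsq : (γ * (N * η)) ^ 2 ≤ (2 * T) ^ 2 :=
    pow_le_pow_left₀ (by positivity) hγT 2
  have hfin : γ ^ 2 * N ^ 2 * η ^ 2 ≤ γ ^ 2 * N ^ 2 * η ^ 2 / 2 := by
    have b1 : (2 * T) ^ 2 = 4 * T ^ 2 := by ring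
    have b2 : 4 * T ^ 2 ≤ 4 * (N * ∑ h : Fin L → S, D h * e h) := by linarith
    have b3 : 4 * (N * ∑ h : Fin L → S, D h * e h) ≤ 4 * (N * (η ^ 2 * γ ^ 2 / 8 * N)) := by
      have := mul_le_mul_of_nonneg_left hEb (le_of_lt hN)
      linarith
    nlinarith [hsq]
  have : 0 < γ ^ 2 * N ^ 2 * η ^ 2 := by positivity
  linarith

end Conc

end Stmt9
namespace Stmt9

variable {Q S : Type*} [Fintype S] [Fintype Q] [DecidableEq Q]

lemma π_le_one (G : PFSA Q S) (q : Q) (σ : S) : G.π q σ ≤ 1 := by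
  rw [← G.π_sum q]
  exact Finset.single_le_sum (fun σ _ => G.π_nonneg q σ) (Finset.mem_univ σ)

lemma πs_le_one (G : PFSA Q S) (q : Q) (x : List S) : G.πs q x ≤ 1 := by
  induction x generalizing q with
  | nil => exact le_refl 1
  | cons σ x ih =>
      exact mul_le_one₀ (π_le_one G q σ) (πs_nonneg G _ x) (ih _)

lemma NN_total (G : PFSA Q S) (℘ : Q → ℝ) (hsum : ∑ q, ℘ q = 1) (n : ℕ) :
    ∑ y : Fin n → S, NN G ℘ (List.ofFn y) = 1 := by
  unfold NN uw
  rw [Finset.sum_comm]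
  calc ∑ q, ∑ y : Fin n → S, ℘ q * G.πs q (List.ofFn y) = ∑ q, ℘ q := by
        refine Finset.sum_congr rfl fun q _ => ?_
        rw [← Finset.mul_sum, sum_πs_words, mul_one]
    _ = 1 := hsum

lemma wvec_nonneg (G : PFSA Q S) (℘ : Q → ℝ) (h0 : ∀ q, 0 ≤ ℘ q) (x : List S) (q' : Q) :
    0 ≤ G.wvec ℘ x q' := by
  rw [wvec_eq]
  refine Finset.sum_nonneg fun q _ => ?_
  split
  · exact mul_nonneg (h0 q) (πs_nonneg G q x)
  · exact le_refl 0

lemma PrW_NN (G : PFSA Q S) (℘ : Q → ℝ) (x : List S) : G.PrW ℘ x = NN G ℘ x := by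
  rw [PrW_eq]; rfl

lemma wvec_append (G : PFSA Q S) (℘ : Q → ℝ) (y z : List S) (q'' : Q) :
    G.wvec ℘ (y ++ z) q''
      = ∑ q1, if G.δs q1 z = q'' then G.wvec ℘ y q1 * G.πs q1 z else 0 := by
  rw [wvec_eq]
  have lhs : ∀ q, (if G.δs q (y ++ z) = q'' then ℘ q * G.πs q (y ++ z) else 0)
      = ∑ q1, if G.δs q y = q1 then
          (if G.δs q1 z = q'' then (℘ q * G.πs q y) * G.πs q1 z else 0) else 0 := by
    intro q
    rw [Finset.sum_ite_eq Finset.univ (G.δs q y), if_pos (Finset.mem_univ _)]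
    rw [δs_append, πs_append]
    split
    · ring
    · rfl
  rw [Finset.sum_congr rfl fun q _ => lhs q, Finset.sum_comm]
  refine Finset.sum_congr rfl fun q1 _ => ?_
  rw [wvec_eq, Finset.sum_mul]
  by_cases h2 : G.δs q1 z = q''
  · simp only [if_pos h2]
    refine Finset.sum_congr rfl fun q _ => ?_
    by_cases h1 : G.δs q y = q1 <;> simp [h1]
  · simp only [if_neg h2]
    exact Finset.sum_eq_zero fun q _ => by
      by_cases h1 : G.δs q y = q1 <;> simp [h1, h2]

lemma PrW_append (G : PFSA Q S) (℘ : Q → ℝ) (y z : List S) :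
    G.PrW ℘ (y ++ z) = ∑ q1, G.wvec ℘ y q1 * G.πs q1 z := by
  unfold PFSA.PrW
  rw [Finset.sum_congr rfl fun q'' _ => wvec_append G ℘ y z q'', Finset.sum_comm]
  refine Finset.sum_congr rfl fun q1 _ => ?_
  rw [Finset.sum_ite_eq Finset.univ (G.δs q1 z), if_pos (Finset.mem_univ _)]

end Stmt9
namespace Stmt9

variable {Q S : Type*} [Fintype S] [Fintype Q] [DecidableEq Q]

/-- Concentration: a word with small energy increment has a nearly-deterministic belief. -/
lemma concentration (G : PFSA Q S) (℘ : Q → ℝ) (h0 : ∀ q, 0 ≤ ℘ q)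
    (L : ℕ) (γ : ℝ) (hγ : 0 < γ) (hTV : ∀ r r' : Q, r ≠ r' → γ ≤ TV G L r r')
    (η : ℝ) (hη : 0 < η) (hη2 : (Fintype.card Q : ℝ) * η ≤ 1)
    (y : List S) (hN : 0 < NN G ℘ y)
    (hE : (∑ h : Fin L → S, phiE G ℘ (y ++ List.ofFn h)) - phiE G ℘ y
        ≤ η ^ 2 * γ ^ 2 / 8 * NN G ℘ y) :
    ∃ r : Q, (1 - (Fintype.card Q : ℝ) * η) * NN G ℘ y ≤ G.wvec ℘ y r := by
  classical
  set N := NN G ℘ y with hNdef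
  set g : Q → ℝ := fun q => uw G ℘ y q / N with hgdef
  have hgsum : ∑ q, g q = 1 := by
    rw [hgdef, ← Finset.sum_div]
    exact div_self hN.ne'
  have hg0 : ∀ q, 0 ≤ g q := fun q => div_nonneg (uw_nonneg G ℘ h0 y q) hN.le
  have hQne : Nonempty Q := by
    rcases isEmpty_or_nonempty Q with hQ | hQ
    · exfalso
      rw [hNdef] at hN
      unfold NN at hN
      rw [Finset.univ_eq_empty, Finset.sum_empty] at hN
      exact lt_irrefl 0 hN
    · exact hQ
  obtain ⟨q₀, hq₀⟩ : ∃ q, η ≤ g q := by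
    by_contra hcon
    push_neg at hcon
    have hlt : ∑ q, g q < ∑ _q : Q, η :=
      Finset.sum_lt_sum_of_nonempty Finset.univ_nonempty fun q _ => hcon q
    rw [hgsum, Finset.sum_const, Finset.card_univ, nsmul_eq_mul] at hlt
    linarith
  have himg : ∀ q, η ≤ g q → G.δs q y = G.δs q₀ y := fun q hq =>
    same_image G ℘ h0 L γ hγ hTV η hη y hN hE q q₀ hq hq₀
  refine ⟨G.δs q₀ y, ?_⟩
  have hwv : G.wvec ℘ y (G.δs q₀ y)
      = ∑ q, if G.δs q y = G.δs q₀ y then uw G ℘ y q else 0 := by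
    rw [wvec_eq]; rfl
  have hterm : ∀ q, (if η ≤ g q then uw G ℘ y q else 0)
      ≤ (if G.δs q y = G.δs q₀ y then uw G ℘ y q else 0) := by
    intro q
    by_cases hc : η ≤ g q
    · rw [if_pos hc, if_pos (himg q hc)]
    · rw [if_neg hc]
      split
      · exact uw_nonneg G ℘ h0 y q
      · exact le_refl 0
  have hlow : (1 - (Fintype.card Q : ℝ) * η) * N
      ≤ ∑ q, if η ≤ g q then uw G ℘ y q else 0 := by
    have e1 : ∀ q, (if η ≤ g q then uw G ℘ y q else 0)
        = N * (if η ≤ g q then g q else 0) := by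
      intro q
      split
      · rw [hgdef]
        field_simp
      · rw [mul_zero]
    rw [Finset.sum_congr rfl fun q _ => e1 q, ← Finset.mul_sum]
    have split2 : ∑ q, (if η ≤ g q then g q else 0)
        = 1 - ∑ q, (if η ≤ g q then 0 else g q) := by
      have hterm2 : ∀ q, (if η ≤ g q then g q else 0) + (if η ≤ g q then 0 else g q) = g q := by
        intro q; split <;> simp
      have hs : ∑ q, ((if η ≤ g q then g q else 0) + (if η ≤ g q then 0 else g q)) = 1 := by
        rw [Finset.sum_congr rfl fun q _ => hterm2 q]
        exact hgsum
      rw [Finset.sum_add_distrib] at hs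
      linarith
    have hsmall : ∑ q, (if η ≤ g q then 0 else g q) ≤ (Fintype.card Q : ℝ) * η := by
      calc ∑ q, (if η ≤ g q then 0 else g q) ≤ ∑ _q : Q, η := by
            refine Finset.sum_le_sum fun q _ => ?_
            split
            · exact hη.le
            · next hc => exact (lt_of_not_ge hc).le
        _ = (Fintype.card Q : ℝ) * η := by
            rw [Finset.sum_const, Finset.card_univ, nsmul_eq_mul]
    rw [split2]
    have h1 : 1 - (Fintype.card Q : ℝ) * η ≤ 1 - ∑ q, (if η ≤ g q then 0 else g q) := by
      linarith
    calc (1 - (Fintype.card Q : ℝ) * η) * N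
        ≤ (1 - ∑ q, (if η ≤ g q then 0 else g q)) * N :=
          mul_le_mul_of_nonneg_right h1 hN.le
      _ = N * (1 - ∑ q, (if η ≤ g q then 0 else g q)) := mul_comm _ _
  calc (1 - (Fintype.card Q : ℝ) * η) * N ≤ ∑ q, if η ≤ g q then uw G ℘ y q else 0 := hlow
    _ ≤ ∑ q, if G.δs q y = G.δs q₀ y then uw G ℘ y q else 0 := Finset.sum_le_sum fun q _ => hterm q
    _ = G.wvec ℘ y (G.δs q₀ y) := hwv.symm

/-- Iterated block bound: the block energy sum dominates the single-word energy. -/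
lemma phiE_le_block (G : PFSA Q S) (℘ : Q → ℝ) (h0 : ∀ q, 0 ≤ ℘ q) (L : ℕ) (y : List S) :
    phiE G ℘ y ≤ ∑ h : Fin L → S, phiE G ℘ (y ++ List.ofFn h) := by
  induction L with
  | zero =>
      rw [Fintype.sum_unique (fun h : Fin 0 → S => phiE G ℘ (y ++ List.ofFn h))]
      rw [show List.ofFn (default : Fin 0 → S) = [] from List.ofFn_zero, List.append_nil]
  | succ L ih =>
      have hs := sum_snoc (n := L) (fun w => phiE G ℘ (y ++ w))
      rw [hs]
      refine le_trans ih (Finset.sum_le_sum fun g _ => ?_)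
      have := phiE_le_sum_snoc G ℘ h0 (y ++ List.ofFn g)
      refine le_trans this (le_of_eq (Finset.sum_congr rfl fun σ _ => ?_))
      rw [List.append_assoc]

end Stmt9
namespace Stmt9

variable {Q S : Type*} [Fintype S] [Fintype Q] [DecidableEq Q]

set_option maxHeartbeats 1000000 in
/-- Synchronization: beliefs get arbitrarily concentrated on any prescribed state. -/
lemma exists_sync (G : PFSA Q S) (hSC : G.StronglyConnected) (hDist : G.Distinguishable)
    (℘ : Q → ℝ) (h0 : ∀ q, 0 ≤ ℘ q) (hsum : ∑ q, ℘ q = 1)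
    (c : ℝ) (hc : 0 < c) (qt : Q) :
    ∃ x : List S, 0 < G.PrW ℘ x ∧ 1 - c ≤ G.wdist ℘ x qt := by
  classical
  have hQne : Nonempty Q := by
    rcases isEmpty_or_nonempty Q with hQ | hQ
    · exfalso
      rw [Finset.univ_eq_empty, Finset.sum_empty] at hsum
      exact one_ne_zero hsum.symm
    · exact hQ
  have hk : 0 < (Fintype.card Q : ℝ) := by
    exact_mod_cast Fintype.card_pos_iff.2 hQne
  obtain ⟨L, γ, hγ, hTV⟩ := exists_horizon G hDist
  -- strong connectivity constants
  have hz : ∀ p : Q × Q, ∃ z : List S, G.δs p.1 z = p.2 ∧ 0 < G.πs p.1 z :=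
    fun p => hSC p.1 p.2
  choose zw hzw1 hzw2 using hz
  set ρ : ℝ := Finset.univ.inf' (Finset.univ_nonempty (α := Q × Q))
    (fun p => G.πs p.1 (zw p)) with hρdef
  have hρ : 0 < ρ := by
    rw [hρdef, Finset.lt_inf'_iff]
    intro p _
    exact hzw2 p
  -- parameters
  set a : ℝ := min (c * ρ / 2) (1 / 2) with hadef
  have ha : 0 < a := lt_min (by positivity) one_half_pos
  have ha2 : a ≤ 1 / 2 := min_le_right _ _
  have ha3 : a ≤ c * ρ / 2 := min_le_left _ _
  set η : ℝ := a / (Fintype.card Q : ℝ) with hηdef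
  have hη : 0 < η := div_pos ha hk
  have hkη : (Fintype.card Q : ℝ) * η = a := by
    rw [hηdef]; field_simp
  have hη2 : (Fintype.card Q : ℝ) * η ≤ 1 := by rw [hkη]; linarith
  set ε₀ : ℝ := η ^ 2 * γ ^ 2 / 8 with hε₀def
  have hε₀ : 0 < ε₀ := by positivity
  set Nst : ℕ := ⌈1 / ε₀⌉₊ + 1 with hNstdef
  have hNst : 0 < Nst := Nat.succ_pos _
  have hNstR : 0 < (Nst : ℝ) := by exact_mod_cast hNst
  have hNstε : 1 / (Nst : ℝ) < ε₀ := by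
    have h1 : 1 / ε₀ < (Nst : ℝ) := by
      rw [hNstdef]
      push_cast
      linarith [Nat.le_ceil (1 / ε₀)]
    rw [div_lt_iff₀ hNstR]
    rw [div_lt_iff₀ hε₀] at h1
    nlinarith
  -- find a good word
  obtain ⟨k₀, _, hinc⟩ := exists_small_increment G ℘ h0 hsum L Nst hNst
  set n : ℕ := k₀ * L with hndef
  have hsplit : hseq G ℘ (n + L)
      = ∑ y : Fin n → S, ∑ h : Fin L → S, phiE G ℘ (List.ofFn y ++ List.ofFn h) :=
    sum_split (fun w => phiE G ℘ w)
  have hsum_inc : ∑ y : Fin n → S,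
      ((∑ h : Fin L → S, phiE G ℘ (List.ofFn y ++ List.ofFn h)) - phiE G ℘ (List.ofFn y))
      ≤ 1 / (Nst : ℝ) := by
    rw [Finset.sum_sub_distrib, ← hsplit]
    exact hinc
  have hEy0 : ∀ y : Fin n → S,
      0 ≤ (∑ h : Fin L → S, phiE G ℘ (List.ofFn y ++ List.ofFn h)) - phiE G ℘ (List.ofFn y) :=
    fun y => sub_nonneg.2 (phiE_le_block G ℘ h0 L (List.ofFn y))
  have hNtot : ∑ y : Fin n → S, NN G ℘ (List.ofFn y) = 1 := NN_total G ℘ hsum n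
  have hEyzero : ∀ y : Fin n → S, NN G ℘ (List.ofFn y) = 0 →
      (∑ h : Fin L → S, phiE G ℘ (List.ofFn y ++ List.ofFn h)) - phiE G ℘ (List.ofFn y) = 0 := by
    intro y hy
    have h1 : phiE G ℘ (List.ofFn y) = 0 := by
      unfold phiE
      rw [hy, div_zero]
    have h2 : ∀ h : Fin L → S, phiE G ℘ (List.ofFn y ++ List.ofFn h) = 0 := by
      intro h
      have hu : ∀ q, uw G ℘ (List.ofFn y ++ List.ofFn h) q = 0 := by
        intro q
        rw [uw_append, uw_eq_zero_of_NN G ℘ h0 _ q hy, zero_mul]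
      unfold phiE
      simp [hu]
    rw [h1, Finset.sum_congr rfl fun h _ => h2 h, Finset.sum_const, sub_zero]
    simp
  obtain ⟨y, hNy, hEy⟩ : ∃ y : Fin n → S, 0 < NN G ℘ (List.ofFn y) ∧
      (∑ h : Fin L → S, phiE G ℘ (List.ofFn y ++ List.ofFn h)) - phiE G ℘ (List.ofFn y)
        ≤ ε₀ * NN G ℘ (List.ofFn y) := by
    by_contra hcon
    push_neg at hcon
    have hex : ∃ y₀ : Fin n → S, 0 < NN G ℘ (List.ofFn y₀) := by
      by_contra hcon2
      push_neg at hcon2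
      have : ∑ y : Fin n → S, NN G ℘ (List.ofFn y) ≤ 0 :=
        Finset.sum_nonpos fun y _ => hcon2 y
      rw [hNtot] at this
      linarith
    obtain ⟨y₀, hy₀⟩ := hex
    have hle : ∀ y : Fin n → S, ε₀ * NN G ℘ (List.ofFn y)
        ≤ (∑ h : Fin L → S, phiE G ℘ (List.ofFn y ++ List.ofFn h)) - phiE G ℘ (List.ofFn y) := by
      intro y
      rcases (NN_nonneg G ℘ h0 (List.ofFn y)).eq_or_lt with hy | hy
      · rw [← hy, mul_zero]
        exact hEy0 y
      · exact (hcon y hy).le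
    have hstrict : ε₀ * NN G ℘ (List.ofFn y₀)
        < (∑ h : Fin L → S, phiE G ℘ (List.ofFn y₀ ++ List.ofFn h)) - phiE G ℘ (List.ofFn y₀) :=
      hcon y₀ hy₀
    have hsum2 : ∑ y : Fin n → S, ε₀ * NN G ℘ (List.ofFn y)
        < ∑ y : Fin n → S,
          ((∑ h : Fin L → S, phiE G ℘ (List.ofFn y ++ List.ofFn h)) - phiE G ℘ (List.ofFn y)) :=
      Finset.sum_lt_sum (fun y _ => hle y) ⟨y₀, Finset.mem_univ y₀, hstrict⟩
    rw [← Finset.mul_sum, hNtot, mul_one] at hsum2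
    linarith
  -- concentration
  obtain ⟨r, hr⟩ := concentration G ℘ h0 L γ hγ hTV η hη hη2 (List.ofFn y) hNy
    (hEy.trans (by rw [hε₀def]))
  rw [hkη] at hr
  -- transport to the target state
  set Y : List S := List.ofFn y with hYdef
  set Nv : ℝ := NN G ℘ Y with hNvdef
  set z : List S := zw (r, qt) with hzdef
  have hδz : G.δs r z = qt := hzw1 (r, qt)
  have hρ' : 0 < G.πs r z := hzw2 (r, qt)
  have hρρ' : ρ ≤ G.πs r z := Finset.inf'_le _ (Finset.mem_univ (r, qt))
  have hρ'1 : G.πs r z ≤ 1 := πs_le_one G r z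
  set W : Q → ℝ := G.wvec ℘ Y with hWdef
  have hW0 : ∀ q1, 0 ≤ W q1 := fun q1 => wvec_nonneg G ℘ h0 Y q1
  have hWsum : ∑ q1, W q1 = Nv := by
    rw [hWdef, hNvdef, ← PrW_NN G ℘ Y]
    rfl
  have hWle : W r ≤ Nv := by
    rw [← hWsum]
    exact Finset.single_le_sum (fun q1 _ => hW0 q1) (Finset.mem_univ r)
  clear_value ρ a η ε₀ Nst n Y Nv z W
  have hWr : (1 - a) * Nv ≤ W r := hr
  have hNv : 0 < Nv := hNy
  have hWrpos : 0 < W r := lt_of_lt_of_le (by nlinarith) hWr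
  have hApos : 0 < W r * G.πs r z := by positivity
  have hnum : W r * G.πs r z ≤ G.wvec ℘ (Y ++ z) qt := by
    rw [wvec_append]
    have he : W r * G.πs r z = if G.δs r z = qt then W r * G.πs r z else 0 := by
      rw [if_pos hδz]
    rw [he, ← hWdef]
    refine Finset.single_le_sum (f := fun q1 => if G.δs q1 z = qt then W q1 * G.πs q1 z else 0)
      (fun q1 _ => ?_) (Finset.mem_univ r)
    split
    · exact mul_nonneg (hW0 q1) (πs_nonneg G q1 z)
    · exact le_refl 0
  have hden : G.PrW ℘ (Y ++ z) ≤ W r * G.πs r z + a * Nv := by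
    rw [PrW_append, ← hWdef]
    have hterm : ∑ x ∈ Finset.univ.erase r, W x * G.πs x z + W r * G.πs r z
        = ∑ x : Q, W x * G.πs x z :=
      Finset.sum_erase_add Finset.univ (fun q1 => W q1 * G.πs q1 z) (Finset.mem_univ r)
    have h2 : ∑ q1 ∈ Finset.univ.erase r, W q1 * G.πs q1 z
        ≤ ∑ q1 ∈ Finset.univ.erase r, W q1 := by
      refine Finset.sum_le_sum fun q1 _ => ?_
      calc W q1 * G.πs q1 z ≤ W q1 * 1 :=
            mul_le_mul_of_nonneg_left (πs_le_one G q1 z) (hW0 q1)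
        _ = W q1 := mul_one _
    have h3 := Finset.sum_erase_add Finset.univ W (Finset.mem_univ r)
    rw [hWsum] at h3
    have h4 : Nv - W r ≤ a * Nv := by nlinarith
    linarith [hterm, h2, h3, h4]
  have hPrpos : 0 < G.PrW ℘ (Y ++ z) := by
    have h1 : G.wvec ℘ (Y ++ z) qt ≤ G.PrW ℘ (Y ++ z) := by
      unfold PFSA.PrW
      exact Finset.single_le_sum (fun q1 _ => wvec_nonneg G ℘ h0 (Y ++ z) q1)
        (Finset.mem_univ qt)
    linarith [hnum, hApos]
  refine ⟨Y ++ z, hPrpos, ?_⟩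
  unfold PFSA.wdist
  rw [le_div_iff₀ hPrpos]
  rcases le_or_gt c 1 with hc1 | hc1
  · have hA1 : ρ * Nv / 2 ≤ W r * G.πs r z := by
      nlinarith [hWr, hρρ', hρ', ha2, hNv, hρ]
    have hcA : a * Nv ≤ c * (W r * G.πs r z) := by nlinarith [hA1, hNv, hc, ha3]
    have hfact : (1 - c) * (W r * G.πs r z + a * Nv) ≤ W r * G.πs r z := by
      nlinarith [hcA, mul_nonneg hc.le (mul_nonneg ha.le hNv.le)]
    calc (1 - c) * G.PrW ℘ (Y ++ z) ≤ (1 - c) * (W r * G.πs r z + a * Nv) :=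
          mul_le_mul_of_nonneg_left hden (by linarith)
      _ ≤ W r * G.πs r z := hfact
      _ ≤ G.wvec ℘ (Y ++ z) qt := hnum
  · calc (1 - c) * G.PrW ℘ (Y ++ z) ≤ 0 :=
          mul_nonpos_of_nonpos_of_nonneg (by linarith) hPrpos.le
      _ ≤ G.wvec ℘ (Y ++ z) qt := wvec_nonneg G ℘ h0 _ _

end Stmt9

/-- Limiting Geometry: the closure of the convex hull of
`D_∞ = {℘_x Π̃ : Pr(x) > 0}` equals the convex hull of `{π̃(q,·) : q ∈ Q}`;
in particular every extreme point of the closed convex hull of `D_∞` is some `π̃(q,·)`. -/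
theorem stmt_9 {Q S : Type*} [Fintype S] [Fintype Q] [DecidableEq Q]
    (hS : 2 ≤ Fintype.card S) (G : PFSA Q S)
    (hSC : G.StronglyConnected) (hDist : G.Distinguishable)
    (℘ : Q → ℝ) (h℘ : G.IsStationary ℘) :
    closure (convexHull ℝ {p : S → ℝ | ∃ x : List S, 0 < G.PrW ℘ x ∧
        p = fun σ => ∑ q, G.wdist ℘ x q * G.π q σ}) =
      convexHull ℝ {p : S → ℝ | ∃ q : Q, p = G.π q} ∧
    ∀ u ∈ Set.extremePoints ℝ (closure (convexHull ℝ {p : S → ℝ | ∃ x : List S,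
        0 < G.PrW ℘ x ∧ p = fun σ => ∑ q, G.wdist ℘ x q * G.π q σ})),
      ∃ q : Q, u = G.π q := by
  classical
  obtain ⟨h0, hsum, -⟩ := h℘
  set D : Set (S → ℝ) := {p : S → ℝ | ∃ x : List S, 0 < G.PrW ℘ x ∧
      p = fun σ => ∑ q, G.wdist ℘ x q * G.π q σ} with hD
  set V : Set (S → ℝ) := {p : S → ℝ | ∃ q : Q, p = G.π q} with hV
  have hdist : ∀ x : List S, 0 < G.PrW ℘ x →
      (∀ q, 0 ≤ G.wdist ℘ x q) ∧ (∑ q, G.wdist ℘ x q = 1) := by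
    intro x hx
    refine ⟨fun q => div_nonneg (Stmt9.wvec_nonneg G ℘ h0 x q) hx.le, ?_⟩
    unfold PFSA.wdist
    rw [← Finset.sum_div]
    exact div_self hx.ne'
  have hVfin : V.Finite := by
    have hVr : V = Set.range G.π := by
      ext p
      simp only [hV, Set.mem_setOf_eq, Set.mem_range, eq_comm]
    rw [hVr]
    exact Set.finite_range _
  have hDV : D ⊆ convexHull ℝ V := by
    rintro p ⟨x, hx, rfl⟩
    have hmem := (convex_convexHull ℝ V).sum_mem (t := Finset.univ)
      (fun q _ => (hdist x hx).1 q) (hdist x hx).2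
      (fun q _ => subset_convexHull ℝ V ⟨q, rfl⟩)
    have heqp : (fun σ => ∑ q, G.wdist ℘ x q * G.π q σ)
        = ∑ q, G.wdist ℘ x q • G.π q := by
      funext σ
      rw [Finset.sum_apply]
      exact Finset.sum_congr rfl fun q _ => rfl
    rw [heqp]
    exact hmem
  have hsub1 : closure (convexHull ℝ D) ⊆ convexHull ℝ V :=
    closure_minimal (convexHull_min hDV (convex_convexHull ℝ V))
      (hVfin.isClosed_convexHull (𝕜 := ℝ))
  have hsub2 : V ⊆ closure (convexHull ℝ D) := by
    rintro p ⟨q, rfl⟩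
    rw [Metric.mem_closure_iff]
    intro ε hε
    obtain ⟨x, hx, hxd⟩ := Stmt9.exists_sync G hSC hDist ℘ h0 hsum (ε / 4)
      (by positivity) q
    refine ⟨fun σ => ∑ q', G.wdist ℘ x q' * G.π q' σ,
      subset_convexHull ℝ D ⟨x, hx, rfl⟩, ?_⟩
    rw [dist_pi_lt_iff hε]
    intro σ
    rw [Real.dist_eq]
    have hd0 := (hdist x hx).1
    have hd1 := (hdist x hx).2
    have hrw : G.π q σ - ∑ q', G.wdist ℘ x q' * G.π q' σ
        = ∑ q', G.wdist ℘ x q' * (G.π q σ - G.π q' σ) := by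
      have e1 : ∀ q', G.wdist ℘ x q' * (G.π q σ - G.π q' σ)
          = G.wdist ℘ x q' * G.π q σ - G.wdist ℘ x q' * G.π q' σ := fun q' => by ring
      rw [Finset.sum_congr rfl fun q' _ => e1 q', Finset.sum_sub_distrib,
        ← Finset.sum_mul, hd1, one_mul]
    have habs : |G.π q σ - ∑ q', G.wdist ℘ x q' * G.π q' σ| ≤ 1 - G.wdist ℘ x q := by
      rw [hrw]
      calc |∑ q', G.wdist ℘ x q' * (G.π q σ - G.π q' σ)|
          ≤ ∑ q', |G.wdist ℘ x q' * (G.π q σ - G.π q' σ)| :=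
            Finset.abs_sum_le_sum_abs _ _
        _ ≤ ∑ q', (if q' = q then 0 else G.wdist ℘ x q') := by
            refine Finset.sum_le_sum fun q' _ => ?_
            by_cases hqq : q' = q
            · rw [if_pos hqq, hqq, abs_mul, sub_self, abs_zero, mul_zero]
            · rw [if_neg hqq, abs_mul, abs_of_nonneg (hd0 q')]
              calc G.wdist ℘ x q' * |G.π q σ - G.π q' σ|
                  ≤ G.wdist ℘ x q' * 1 := by
                    refine mul_le_mul_of_nonneg_left ?_ (hd0 q')
                    rw [abs_le]
                    constructor
                    · have := Stmt9.π_le_one G q' σ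
                      have := G.π_nonneg q σ
                      linarith
                    · have := Stmt9.π_le_one G q σ
                      have := G.π_nonneg q' σ
                      linarith
                _ = G.wdist ℘ x q' := mul_one _
        _ = 1 - G.wdist ℘ x q := by
            have e2 : ∀ q', (if q' = q then 0 else G.wdist ℘ x q')
                = G.wdist ℘ x q' - (if q' = q then G.wdist ℘ x q' else 0) := by
              intro q'; split <;> simp
            rw [Finset.sum_congr rfl fun q' _ => e2 q', Finset.sum_sub_distrib, hd1,
              Finset.sum_ite_eq' Finset.univ q (G.wdist ℘ x), if_pos (Finset.mem_univ q)]
    calc |G.π q σ - ∑ q', G.wdist ℘ x q' * G.π q' σ| ≤ 1 - G.wdist ℘ x q := habs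
      _ ≤ ε / 4 := by linarith
      _ < ε := by linarith
  have heq : closure (convexHull ℝ D) = convexHull ℝ V :=
    le_antisymm hsub1 (convexHull_min hsub2 (convex_convexHull ℝ D).closure)
  refine ⟨heq, ?_⟩
  intro u hu
  rw [heq] at hu
  obtain ⟨q, hq⟩ := extremePoints_convexHull_subset hu
  exact ⟨q, hq⟩
end
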